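/- arXiv:quant-ph/0410090 — 6 statements merged into one kernel-verified Lean document; each statement's English description precedes it below -/
import Mathlib

section
/- Let ρ be a density matrix on ℂ^d, let B = (ψ_1,…,ψ_d) be an orthonormal basis of ℂ^d, and set p_i = ⟨ψ_i, ρψ_i⟩. Then the Shannon entropy H(ρ,B) = −∑_i p_i log₂ p_i of the diagonal of ρ in the basis B satisfies H(ρ,B) = S(ρ) + inf_σ S(ρ‖σ), where the infimum runs over all positive definite density matrices σ that are diagonal in the basis B. -/
open Matrix
open scoped Kronecker ComplexOrder

/-- von Neumann entropy in bits (with convention `0 * log₂ 0 = 0`). -/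
noncomputable def vnEntropy {n : Type*} [Fintype n] [DecidableEq n] (A : Matrix n n ℂ) : ℝ :=
  if h : A.IsHermitian then -∑ i, h.eigenvalues i * Real.logb 2 (h.eigenvalues i) else 0

/-- `log₂` of a Hermitian matrix via the spectral functional calculus. -/
noncomputable def matLog2 {n : Type*} [Fintype n] [DecidableEq n] (A : Matrix n n ℂ) :
    Matrix n n ℂ :=
  if h : A.IsHermitian then h.cfc (Real.logb 2) else 0

/-- relative entropy `S(ρ‖σ) = tr(ρ log₂ ρ) − tr(ρ log₂ σ)` (in bits). -/
noncomputable def relEnt {n : Type*} [Fintype n] [DecidableEq n] (ρ σ : Matrix n n ℂ) : ℝ :=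
  ((ρ * matLog2 ρ).trace).re - ((ρ * matLog2 σ).trace).re

namespace ShannonAux

variable {d : ℕ}

/-- Gibbs' inequality. -/
lemma gibbs (p c : Fin d → ℝ) (hp : ∀ i, 0 ≤ p i) (hc : ∀ i, 0 < c i)
    (hps : ∑ i, p i = 1) (hcs : ∑ i, c i = 1) :
    ∑ i, p i * Real.logb 2 (c i) ≤ ∑ i, p i * Real.logb 2 (p i) := by
  have hl2 : (0:ℝ) < Real.log 2 := Real.log_pos (by norm_num)
  have key : ∀ i, p i * Real.logb 2 (c i) - p i * Real.logb 2 (p i)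
      ≤ (c i - p i) / Real.log 2 := by
    intro i
    rcases eq_or_lt_of_le (hp i) with h0 | h0
    · rw [← h0]
      simp only [zero_mul, sub_zero, zero_sub, neg_zero, sub_zero]
      exact div_nonneg (by linarith [hc i]) hl2.le
    · have hcp : 0 < c i / p i := div_pos (hc i) h0
      have hlog := Real.log_le_sub_one_of_pos hcp
      have heq : Real.logb 2 (c i) - Real.logb 2 (p i)
          = Real.log (c i / p i) / Real.log 2 := by
        rw [Real.log_div (hc i).ne' h0.ne']
        simp [Real.logb, sub_div]
      calc p i * Real.logb 2 (c i) - p i * Real.logb 2 (p i)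
          = p i * (Real.log (c i / p i) / Real.log 2) := by rw [← mul_sub, heq]
        _ ≤ p i * ((c i / p i - 1) / Real.log 2) := by gcongr
        _ = (c i - p i) / Real.log 2 := by field_simp
  have hsum := Finset.sum_le_sum (fun i (_ : i ∈ Finset.univ) => key i)
  rw [Finset.sum_sub_distrib] at hsum
  have h0 : ∑ i, (c i - p i) / Real.log 2 = 0 := by
    rw [← Finset.sum_div, Finset.sum_sub_distrib, hps, hcs]
    simp
  linarith

/-- Well-definedness of the functional calculus. -/
lemma cfc_welldef (f : ℝ → ℝ) (U V : Matrix (Fin d) (Fin d) ℂ)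
    (hU : U * Uᴴ = 1) (hU' : Uᴴ * U = 1) (hV : V * Vᴴ = 1) (hV' : Vᴴ * V = 1)
    (c μ : Fin d → ℝ)
    (h : U * diagonal (fun i => (c i : ℂ)) * Uᴴ = V * diagonal (fun i => (μ i : ℂ)) * Vᴴ) :
    U * diagonal (fun i => (f (c i) : ℂ)) * Uᴴ
      = V * diagonal (fun i => (f (μ i) : ℂ)) * Vᴴ := by
  have hWc : (Vᴴ * U) * diagonal (fun i => (c i : ℂ))
      = diagonal (fun i => (μ i : ℂ)) * (Vᴴ * U) := by
    have h2 := congrArg (fun X => Vᴴ * X * U) h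
    simp only [mul_assoc] at h2 ⊢
    rw [hU', mul_one] at h2
    rw [show Vᴴ * (V * ((diagonal fun i => (μ i : ℂ)) * (Vᴴ * U)))
        = (Vᴴ * V) * ((diagonal fun i => (μ i : ℂ)) * (Vᴴ * U)) from by
      simp only [mul_assoc], hV', one_mul] at h2
    exact h2
  have key : ∀ i j, (Vᴴ * U) i j * (f (c j) : ℂ) = (f (μ i) : ℂ) * (Vᴴ * U) i j := by
    intro i j
    have h1 := congrFun (congrFun hWc i) j
    simp only [Matrix.mul_diagonal, Matrix.diagonal_mul] at h1
    by_cases hw : (Vᴴ * U) i j = 0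
    · simp [hw]
    · have hcm : (c j : ℂ) = (μ i : ℂ) := by
        apply mul_right_cancel₀ hw
        rw [mul_comm ((c j : ℂ))]
        exact h1
      have hcm' : c j = μ i := by exact_mod_cast hcm
      rw [hcm']
      ring
  have hWf : (Vᴴ * U) * diagonal (fun i => (f (c i) : ℂ))
      = diagonal (fun i => (f (μ i) : ℂ)) * (Vᴴ * U) := by
    ext i j
    simp only [Matrix.mul_diagonal, Matrix.diagonal_mul]
    exact key i j
  have step : V * ((Vᴴ * U) * diagonal (fun i => (f (c i) : ℂ)) * Uᴴ)
      = U * diagonal (fun i => (f (c i) : ℂ)) * Uᴴ := by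
    simp only [← mul_assoc, hV, one_mul]
  rw [← step, show (Vᴴ * U) * diagonal (fun i => (f (c i) : ℂ)) * Uᴴ
      = ((Vᴴ * U) * diagonal (fun i => (f (c i) : ℂ))) * Uᴴ from rfl, hWf]
  simp only [mul_assoc, hU, mul_one]

/-- Trace of `A * (U * diagonal g * Uᴴ)`. -/
lemma trace_mul_conj_diag (A U : Matrix (Fin d) (Fin d) ℂ) (g : Fin d → ℂ) :
    (A * (U * diagonal g * Uᴴ)).trace = ∑ i, (Uᴴ * A * U) i i * g i := by
  have h1 : A * (U * diagonal g * Uᴴ) = (A * U * diagonal g) * Uᴴ := by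
    simp only [mul_assoc]
  rw [h1, Matrix.trace_mul_comm]
  rw [show Uᴴ * (A * U * diagonal g) = (Uᴴ * A * U) * diagonal g from by simp only [mul_assoc]]
  simp [Matrix.trace, Matrix.diag, Matrix.mul_diagonal]

end ShannonAux

open ShannonAux in
/-- For a density matrix ρ on ℂ^d and an orthonormal basis `v` of ℂ^d, the Shannon
entropy of the diagonal of ρ in the basis `v` equals `S(ρ)` plus the infimum of the relative
entropy `S(ρ‖σ)` over positive definite density matrices σ diagonal in the basis `v`. -/
theorem shannon_entropy_eq_entropy_add_inf_relEnt
    {d : ℕ} (ρ : Matrix (Fin d) (Fin d) ℂ)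
    (hρ : ρ.PosSemidef) (hρtr : ρ.trace = 1)
    (v : Fin d → (Fin d → ℂ))
    (hv : ∀ i j, star (v i) ⬝ᵥ v j = if i = j then 1 else 0) :
    (-∑ i, (star (v i) ⬝ᵥ (ρ *ᵥ v i)).re * Real.logb 2 ((star (v i) ⬝ᵥ (ρ *ᵥ v i)).re))
      = vnEntropy ρ +
        sInf {r : ℝ | ∃ σ : Matrix (Fin d) (Fin d) ℂ, σ.PosDef ∧ σ.trace = 1 ∧
          (∃ c : Fin d → ℝ, σ = ∑ i, (c i : ℂ) • vecMulVec (v i) (star (v i))) ∧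
          r = relEnt ρ σ} := by
  rcases Nat.eq_zero_or_pos d with hd | hd
  · subst hd
    simp [Matrix.trace] at hρtr
  -- basic setup
  set S := {r : ℝ | ∃ σ : Matrix (Fin d) (Fin d) ℂ, σ.PosDef ∧ σ.trace = 1 ∧
          (∃ c : Fin d → ℝ, σ = ∑ i, (c i : ℂ) • vecMulVec (v i) (star (v i))) ∧
          r = relEnt ρ σ} with hSdef
  set U : Matrix (Fin d) (Fin d) ℂ := Matrix.of (fun j i => v i j) with hUdef
  have hU' : Uᴴ * U = 1 := by
    ext i j
    simpa [Matrix.mul_apply, Matrix.conjTranspose_apply, hUdef, Matrix.of_apply,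
      Matrix.one_apply, dotProduct] using hv i j
  have hU : U * Uᴴ = 1 := mul_eq_one_comm.mp hU'
  -- conjugated diagonal entries
  have hconj : ∀ (A : Matrix (Fin d) (Fin d) ℂ) (i : Fin d),
      (Uᴴ * A * U) i i = star (v i) ⬝ᵥ (A *ᵥ v i) := by
    intro A i
    simp only [Matrix.mul_apply, Matrix.conjTranspose_apply, hUdef, Matrix.of_apply,
      dotProduct, Matrix.mulVec, Finset.sum_mul, Finset.mul_sum, Pi.star_apply]
    rw [Finset.sum_comm]
    exact Finset.sum_congr rfl fun l _ => Finset.sum_congr rfl fun k _ => by ring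
  -- U diag Uᴴ as a sum of rank one projections
  have hdiag : ∀ g : Fin d → ℝ, U * diagonal (fun i => (g i : ℂ)) * Uᴴ
      = ∑ i, (g i : ℂ) • vecMulVec (v i) (star (v i)) := by
    intro g
    ext j k
    simp only [Matrix.mul_apply, Matrix.mul_diagonal, Matrix.conjTranspose_apply, hUdef,
      Matrix.of_apply, Matrix.sum_apply, Matrix.smul_apply, Matrix.vecMulVec_apply,
      smul_eq_mul, Pi.star_apply, Matrix.diagonal_apply, mul_ite, ite_mul, mul_zero, zero_mul,
      Finset.sum_ite_eq, Finset.sum_ite_eq', Finset.mem_univ, if_true]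
    exact Finset.sum_congr rfl fun l _ => by ring
  -- trace of U diag Uᴴ
  have htr : ∀ g : Fin d → ℂ, (U * diagonal g * Uᴴ).trace = ∑ i, g i := by
    intro g
    have := trace_mul_conj_diag (1 : Matrix (Fin d) (Fin d) ℂ) U g
    rw [one_mul] at this
    rw [this]
    refine Finset.sum_congr rfl fun i _ => ?_
    rw [mul_one, hU']
    simp [Matrix.one_apply]
  -- the probabilities
  set p : Fin d → ℝ := fun i => (star (v i) ⬝ᵥ (ρ *ᵥ v i)).re with hpdef
  have hp0 : ∀ i, 0 ≤ p i := by
    intro i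
    have := hρ.dotProduct_mulVec_nonneg (v i)
    have h2 := (Complex.le_def.mp this).1
    simpa using h2
  have hpsum : ∑ i, p i = 1 := by
    have h1 : (Uᴴ * ρ * U).trace = 1 := by
      rw [mul_assoc, Matrix.trace_mul_comm, mul_assoc, hU, mul_one, hρtr]
    have h2 : ∑ i, star (v i) ⬝ᵥ (ρ *ᵥ v i) = (1 : ℂ) := by
      rw [← h1]
      exact (Finset.sum_congr rfl fun i _ => (hconj ρ i).symm)
    have h3 := congrArg Complex.re h2
    rwa [Complex.re_sum] at h3
  set H : ℝ := -∑ i, p i * Real.logb 2 (p i) with hHdef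
  -- eigenvalue side
  set lam : Fin d → ℝ := hρ.1.eigenvalues with hlam
  set T : ℝ := ∑ i, lam i * Real.logb 2 (lam i) with hTdef
  have hvn : vnEntropy ρ = -T := by rw [vnEntropy, dif_pos hρ.1]
  -- unitarity of eigenvector matrix of any Hermitian matrix
  have hunit : ∀ {A : Matrix (Fin d) (Fin d) ℂ} (hA : A.IsHermitian),
      (hA.eigenvectorUnitary : Matrix (Fin d) (Fin d) ℂ) *
        (hA.eigenvectorUnitary : Matrix (Fin d) (Fin d) ℂ)ᴴ = 1 := by
    intro A hA
    have := Matrix.mem_unitaryGroup_iff.mp hA.eigenvectorUnitary.2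
    simpa [star_eq_conjTranspose] using this
  have hspec : ∀ {A : Matrix (Fin d) (Fin d) ℂ} (hA : A.IsHermitian),
      A = (hA.eigenvectorUnitary : Matrix (Fin d) (Fin d) ℂ) *
        diagonal (fun i => (hA.eigenvalues i : ℂ)) *
        (hA.eigenvectorUnitary : Matrix (Fin d) (Fin d) ℂ)ᴴ := by
    intro A hA
    have := hA.spectral_theorem
    rw [Unitary.conjStarAlgAut_apply] at this
    simpa [Function.comp_def, Matrix.star_eq_conjTranspose] using this
  -- trace of ρ * matLog2 ρ
  have hTr : ((ρ * matLog2 ρ).trace).re = T := by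
    set V := (hρ.1.eigenvectorUnitary : Matrix (Fin d) (Fin d) ℂ) with hVdef
    have hVu : V * Vᴴ = 1 := hunit hρ.1
    have hVu' : Vᴴ * V = 1 := mul_eq_one_comm.mp hVu
    have hlog : matLog2 ρ = V * diagonal (fun i => (Real.logb 2 (lam i) : ℂ)) * Vᴴ := by
      rw [matLog2, dif_pos hρ.1]
      unfold Matrix.IsHermitian.cfc
      rfl
    have hVdV : Vᴴ * ρ * V = diagonal (fun i => (lam i : ℂ)) := by
      conv_lhs => rw [hspec hρ.1]
      simp only [mul_assoc]
      rw [hVu', mul_one, ← mul_assoc, hVu', one_mul]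
    rw [hlog, trace_mul_conj_diag ρ V]
    rw [Complex.re_sum]
    rw [hTdef]
    refine Finset.sum_congr rfl fun i _ => ?_
    rw [hVdV]
    simp [Matrix.diagonal_apply_eq, Complex.mul_re]
  -- Hermitian-ness of conjugated real diagonals
  have hherm : ∀ c : Fin d → ℝ, (U * diagonal (fun i => (c i : ℂ)) * Uᴴ).IsHermitian := by
    intro c
    have hD : (diagonal (fun i => (c i : ℂ)))ᴴ = diagonal (fun i => (c i : ℂ)) :=
      (Matrix.isHermitian_diagonal_of_self_adjoint _
        (funext fun i => Complex.conj_ofReal (c i)))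
    unfold Matrix.IsHermitian
    simp only [Matrix.conjTranspose_mul, Matrix.conjTranspose_conjTranspose, hD, mul_assoc]
  -- matLog2 of conjugated diagonal
  have hmatlog : ∀ c : Fin d → ℝ, matLog2 (U * diagonal (fun i => (c i : ℂ)) * Uᴴ)
      = U * diagonal (fun i => (Real.logb 2 (c i) : ℂ)) * Uᴴ := by
    intro c
    have hσh := hherm c
    set V := (hσh.eigenvectorUnitary : Matrix (Fin d) (Fin d) ℂ) with hVdef
    have hVu : V * Vᴴ = 1 := hunit hσh
    have hVu' : Vᴴ * V = 1 := mul_eq_one_comm.mp hVu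
    have hEq : U * diagonal (fun i => (c i : ℂ)) * Uᴴ
        = V * diagonal (fun i => (hσh.eigenvalues i : ℂ)) * Vᴴ := hspec hσh
    rw [matLog2, dif_pos hσh]
    have : hσh.cfc (Real.logb 2)
        = V * diagonal (fun i => (Real.logb 2 (hσh.eigenvalues i) : ℂ)) * Vᴴ := by
      unfold Matrix.IsHermitian.cfc
      rfl
    rw [this, ← cfc_welldef (Real.logb 2) U V hU hU' hVu hVu' c hσh.eigenvalues hEq]
  -- relEnt of conjugated diagonal
  have hrel : ∀ c : Fin d → ℝ,
      relEnt ρ (U * diagonal (fun i => (c i : ℂ)) * Uᴴ)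
        = T - ∑ i, p i * Real.logb 2 (c i) := by
    intro c
    rw [relEnt, hTr, hmatlog c, trace_mul_conj_diag ρ U, Complex.re_sum]
    congr 1
    refine Finset.sum_congr rfl fun i _ => ?_
    rw [hconj ρ i]
    simp [hpdef, Complex.mul_re]
  -- lower bound on S
  have hlb : ∀ r ∈ S, T + H ≤ r := by
    rintro r ⟨σ, hσpd, hσtr, ⟨c, hc⟩, hr⟩
    rw [← hdiag c] at hc
    subst hc
    have hci : ∀ i, star (v i) ⬝ᵥ ((U * diagonal (fun i => (c i : ℂ)) * Uᴴ) *ᵥ v i)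
        = (c i : ℂ) := by
      intro i
      rw [← hconj _ i]
      rw [show Uᴴ * (U * diagonal (fun i => (c i : ℂ)) * Uᴴ) * U
          = (Uᴴ * U) * diagonal (fun i => (c i : ℂ)) * (Uᴴ * U) from by simp only [mul_assoc],
        hU', one_mul, mul_one]
      simp
    have hvne : ∀ i, v i ≠ 0 := by
      intro i hvi
      have := hv i i
      rw [hvi] at this
      simp at this
    have hcpos : ∀ i, 0 < c i := by
      intro i
      have := hσpd.dotProduct_mulVec_pos (hvne i)
      rw [hci i] at this
      exact Complex.zero_lt_real.mp this
    have hcsum : ∑ i, c i = 1 := by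
      have := htr (fun i => (c i : ℂ))
      rw [hσtr] at this
      have h2 : ((∑ i, c i : ℝ) : ℂ) = 1 := by push_cast; rw [this]
      exact_mod_cast h2
    rw [hr, hrel c]
    have := gibbs p c hp0 hcpos hpsum hcsum
    rw [hHdef]
    linarith
  -- near-optimal elements
  have hmem : ∀ ε : ℝ, 0 < ε → ∃ r ∈ S, r ≤ T + H + ε := by
    intro ε hε
    set s : ℝ := (2 : ℝ) ^ (-ε) with hsdef
    have hs0 : 0 < s := Real.rpow_pos_of_pos (by norm_num) _
    have hs1 : s < 1 := Real.rpow_lt_one_of_one_lt_of_neg (by norm_num) (by linarith)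
    set t : ℝ := 1 - s with htdef
    have ht0 : 0 < t := by simp only [htdef]; linarith
    set c : Fin d → ℝ := fun i => s * p i + t / d with hcdef
    have hcpos : ∀ i, 0 < c i := by
      intro i
      have h1 : 0 < t / d := div_pos ht0 (by exact_mod_cast hd)
      have h2 : 0 ≤ s * p i := mul_nonneg hs0.le (hp0 i)
      simp only [hcdef]
      linarith
    have hcsum : ∑ i, c i = 1 := by
      simp only [hcdef]
      rw [Finset.sum_add_distrib, ← Finset.mul_sum, hpsum, Finset.sum_const,
        Finset.card_univ, Fintype.card_fin, nsmul_eq_mul]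
      have hdne : (d : ℝ) ≠ 0 := by positivity
      field_simp
      ring
    have hpd : (U * diagonal (fun i => (c i : ℂ)) * Uᴴ).PosDef := by
      refine Matrix.PosDef.of_dotProduct_mulVec_pos (hherm c) ?_
      intro x hx
      have hy : Uᴴ *ᵥ x ≠ 0 := by
        intro hy0
        apply hx
        have : (U * Uᴴ) *ᵥ x = x := by rw [hU]; simp
        rw [← this, ← Matrix.mulVec_mulVec, hy0, Matrix.mulVec_zero]
      have hdd := (Matrix.PosDef.diagonal (d := fun i => (c i : ℂ))
        (fun i => Complex.zero_lt_real.mpr (hcpos i))).dotProduct_mulVec_pos hy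
      have hrw : star x ⬝ᵥ ((U * diagonal (fun i => (c i : ℂ)) * Uᴴ) *ᵥ x)
          = star (Uᴴ *ᵥ x) ⬝ᵥ (diagonal (fun i => (c i : ℂ)) *ᵥ (Uᴴ *ᵥ x)) := by
        rw [← Matrix.mulVec_mulVec, ← Matrix.mulVec_mulVec]
        rw [Matrix.dotProduct_mulVec (star x) U]
        congr 1
        rw [Matrix.star_mulVec]
        simp
      rw [hrw]
      exact hdd
    have htr1 : (U * diagonal (fun i => (c i : ℂ)) * Uᴴ).trace = 1 := by
      rw [htr]
      have h2 : ((∑ i, c i : ℝ) : ℂ) = ∑ i, (c i : ℂ) := by push_cast; rfl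
      rw [← h2, hcsum]
      norm_num
    refine ⟨relEnt ρ (U * diagonal (fun i => (c i : ℂ)) * Uᴴ),
      ⟨U * diagonal (fun i => (c i : ℂ)) * Uᴴ, hpd, htr1, ⟨c, hdiag c⟩, rfl⟩, ?_⟩
    · -- value bound
      rw [hrel c]
      have key : ∀ i, p i * (-ε + Real.logb 2 (p i)) ≤ p i * Real.logb 2 (c i) := by
        intro i
        rcases eq_or_lt_of_le (hp0 i) with h0 | h0
        · rw [← h0]; simp
        · have hc1 : s * p i ≤ c i := by
            have : 0 ≤ t / d := le_of_lt (div_pos ht0 (by exact_mod_cast hd))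
            simp only [hcdef]; linarith
          have hsp : 0 < s * p i := mul_pos hs0 h0
          have hlog1 : Real.logb 2 (s * p i) ≤ Real.logb 2 (c i) :=
            Real.logb_le_logb_of_le (by norm_num) hsp hc1
          have hlog2 : Real.logb 2 (s * p i) = -ε + Real.logb 2 (p i) := by
            rw [Real.logb_mul hs0.ne' h0.ne', hsdef,
              Real.logb_rpow (by norm_num) (by norm_num)]
          rw [← hlog2] at *
          exact mul_le_mul_of_nonneg_left hlog1 (hp0 i)
      have hsum : ∑ i, p i * (-ε + Real.logb 2 (p i)) ≤ ∑ i, p i * Real.logb 2 (c i) :=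
        Finset.sum_le_sum fun i _ => key i
      have hexp : ∑ i, p i * (-ε + Real.logb 2 (p i)) = -ε - H := by
        rw [hHdef]
        rw [show ∀ (f : Fin d → ℝ), ∑ i, p i * (-ε + f i) = -ε * ∑ i, p i + ∑ i, p i * f i from
          fun f => by rw [Finset.mul_sum, ← Finset.sum_add_distrib]; exact Finset.sum_congr rfl fun i _ => by ring]
        rw [hpsum]
        ring
      rw [hexp] at hsum
      linarith
  -- conclude
  have hSne : S.Nonempty := by
    obtain ⟨r, hr, _⟩ := hmem 1 one_pos
    exact ⟨r, hr⟩
  have hbdd : BddBelow S := ⟨T + H, hlb⟩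
  have h1 : T + H ≤ sInf S := le_csInf hSne hlb
  have h2 : sInf S ≤ T + H := by
    by_contra hcon
    push_neg at hcon
    obtain ⟨r, hrS, hrle⟩ := hmem ((sInf S - (T + H)) / 2) (by linarith)
    have := csInf_le hbdd hrS
    linarith
  have hSval : sInf S = T + H := le_antisymm h2 h1
  rw [hSval, hvn]
  show H = -T + (T + H)
  ring
end

section
/- Let 𝒮 be a nonempty set of positive definite density matrices on ℂ^{d_A} ⊗ ℂ^{d_B} that is invariant under conjugation by every product unitary U_A ⊗ U_B, and define E(τ) = inf_{σ∈𝒮} S(τ‖σ). Let Λ(ρ) = ∑_i (P_i ⊗ I) ρ (P_i ⊗ I) be a local dephasing of the first factor, where P_1,…,P_k are pairwise orthogonal projections on ℂ^{d_A} with ∑_i P_i = I. Then for every density matrix ρ on ℂ^{d_A} ⊗ ℂ^{d_B}: E(ρ) − E(Λ(ρ)) ≤ S(Λ(ρ)) − S(ρ); that is, the relative entropy distance to 𝒮 decreases by no more than the entropy increases under local dephasing. -/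
open Matrix
open scoped Kronecker ComplexOrder

variable {n : Type*} [Fintype n] [DecidableEq n]

lemma aux_trace_mul_cfc {A : Matrix n n ℂ} (hA : A.IsHermitian) (f : ℝ → ℝ) :
    (A * hA.cfc f).trace = ((∑ i, hA.eigenvalues i * f (hA.eigenvalues i) : ℝ) : ℂ) := by
  set U : Matrix n n ℂ := (hA.eigenvectorUnitary : Matrix n n ℂ) with hUdef
  have hU : star U * U = 1 :=
    (Matrix.mem_unitaryGroup_iff').mp (hA.eigenvectorUnitary).2
  have key : A * hA.cfc f
      = U * (diagonal (RCLike.ofReal ∘ hA.eigenvalues) * diagonal (RCLike.ofReal ∘ f ∘ hA.eigenvalues))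
        * star U := by
    rw [Matrix.IsHermitian.cfc]
    nth_rewrite 1 [hA.spectral_theorem]
    simp only [Unitary.conjStarAlgAut_apply, Unitary.coe_star]
    simp only [mul_assoc]
    rw [← mul_assoc (star U) U, hU, one_mul]
  rw [key, trace_mul_cycle, hU, one_mul, diagonal_mul_diagonal, trace_diagonal]
  push_cast
  rfl

lemma aux_trace_matLog2 {A : Matrix n n ℂ} (hA : A.IsHermitian) :
    ((A * matLog2 A).trace).re = -(vnEntropy A) := by
  rw [matLog2, dif_pos hA, vnEntropy, dif_pos hA, aux_trace_mul_cfc hA, Complex.ofReal_re, neg_neg]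

lemma aux_trace_eq_sum_eigenvalues {A : Matrix n n ℂ} (hA : A.IsHermitian) :
    A.trace = ((∑ i, hA.eigenvalues i : ℝ) : ℂ) := by
  set U : Matrix n n ℂ := (hA.eigenvectorUnitary : Matrix n n ℂ) with hUdef
  have hU : star U * U = 1 :=
    (Matrix.mem_unitaryGroup_iff').mp (hA.eigenvectorUnitary).2
  nth_rewrite 1 [hA.spectral_theorem]
  simp only [Unitary.conjStarAlgAut_apply, Unitary.coe_star]
  rw [trace_mul_cycle, hU, one_mul, trace_diagonal]
  push_cast
  rfl

lemma aux_trace_re_nonneg {A : Matrix n n ℂ} (hA : A.PosSemidef) : 0 ≤ A.trace.re := by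
  rw [aux_trace_eq_sum_eigenvalues hA.1, Complex.ofReal_re]
  exact Finset.sum_nonneg fun i _ => hA.eigenvalues_nonneg i

open scoped MatrixOrder in
lemma aux_trace_mul_psd_nonneg {A B : Matrix n n ℂ} (hA : A.PosSemidef) (hB : B.PosSemidef) :
    0 ≤ (A * B).trace.re := by
  have h1 : A * B = CFC.sqrt A * CFC.sqrt A * B := by rw [CFC.sqrt_mul_sqrt_self A hA.nonneg]
  have h2 : (CFC.sqrt A * CFC.sqrt A * B).trace = (CFC.sqrt A * B * CFC.sqrt A).trace := by
    rw [trace_mul_cycle (CFC.sqrt A) B (CFC.sqrt A)]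
  have h3 : (CFC.sqrt A * B * CFC.sqrt A).PosSemidef := by
    have := hB.mul_mul_conjTranspose_same (CFC.sqrt A)
    rwa [(CFC.sqrt_nonneg A).posSemidef.1.eq] at this
  rw [h1, h2]
  exact aux_trace_re_nonneg h3

lemma aux_neg_matLog2_psd {σ : Matrix n n ℂ} (hσ : σ.PosDef) (htr : σ.trace = 1) :
    (-(matLog2 σ)).PosSemidef := by
  have hH := hσ.1
  rw [matLog2, dif_pos hH, Matrix.IsHermitian.cfc]
  have heig : ∀ i, 0 < hH.eigenvalues i := hσ.eigenvalues_pos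
  have hsum : ∑ i, hH.eigenvalues i = 1 := by
    have := aux_trace_eq_sum_eigenvalues hH
    rw [htr] at this
    exact_mod_cast this.symm
  have hle1 : ∀ i, hH.eigenvalues i ≤ 1 := by
    intro i
    rw [← hsum]
    exact Finset.single_le_sum (fun j _ => (heig j).le) (Finset.mem_univ i)
  have hnonpos : ∀ i, Real.logb 2 (hH.eigenvalues i) ≤ 0 := fun i =>
    Real.logb_nonpos one_lt_two (heig i).le (hle1 i)
  set d : n → ℂ := RCLike.ofReal ∘ Real.logb 2 ∘ hH.eigenvalues with hd
  have key : -((hH.eigenvectorUnitary : Matrix n n ℂ) * diagonal d *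
        star (hH.eigenvectorUnitary : Matrix n n ℂ))
      = (hH.eigenvectorUnitary : Matrix n n ℂ) * diagonal (-d) *
        star (hH.eigenvectorUnitary : Matrix n n ℂ) := by
    have hdn : diagonal (-d) = -diagonal d := by
      rw [diagonal_neg d]; rfl
    rw [hdn, mul_neg, neg_mul]
  simp only [Unitary.conjStarAlgAut_apply, Unitary.coe_star]
  rw [key]
  have hdiag : (diagonal (-d) : Matrix n n ℂ).PosSemidef := by
    refine posSemidef_diagonal_iff.mpr fun i => ?_
    have h0 : (0:ℝ) ≤ -(Real.logb 2 (hH.eigenvalues i)) := by linarith [hnonpos i]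
    have : ((-d) i) = ((-(Real.logb 2 (hH.eigenvalues i)) : ℝ) : ℂ) := by
      simp [hd]
    rw [this]
    exact Complex.zero_le_real.mpr h0
  have := hdiag.mul_mul_conjTranspose_same (hH.eigenvectorUnitary : Matrix n n ℂ)
  rwa [← star_eq_conjTranspose] at this

/-- conjugation by a unitary as a star algebra homomorphism. -/
noncomputable def conjSAH (V : Matrix n n ℂ) (hV : V ∈ Matrix.unitaryGroup n ℂ) :
    Matrix n n ℂ →⋆ₐ[ℂ] Matrix n n ℂ where
  toFun X := V * X * star V
  map_one' := by
    show V * 1 * star V = 1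
    rw [mul_one, Matrix.mem_unitaryGroup_iff.mp hV]
  map_mul' X Y := by
    show V * (X * Y) * star V = (V * X * star V) * (V * Y * star V)
    have h1 : star V * V = 1 := Matrix.mem_unitaryGroup_iff'.mp hV
    calc V * (X * Y) * star V = (V * X) * (star V * V) * (Y * star V) := by
          rw [h1, mul_one]; noncomm_ring
      _ = (V * X * star V) * (V * Y * star V) := by noncomm_ring
  map_zero' := by
    show V * 0 * star V = 0
    simp
  map_add' X Y := by
    show V * (X + Y) * star V = V * X * star V + V * Y * star V
    noncomm_ring
  commutes' c := by
    show V * (algebraMap ℂ (Matrix n n ℂ) c) * star V = algebraMap ℂ (Matrix n n ℂ) c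
    simp only [Algebra.algebraMap_eq_smul_one]
    rw [mul_smul_comm, mul_one, smul_mul_assoc, Matrix.mem_unitaryGroup_iff.mp hV]
  map_star' X := by
    show V * star X * star V = star (V * X * star V)
    simp only [StarMul.star_mul, star_star, mul_assoc]

lemma aux_matLog2_conj {V : Matrix n n ℂ} (hV : V ∈ Matrix.unitaryGroup n ℂ)
    {σ : Matrix n n ℂ} (hσ : σ.IsHermitian) :
    matLog2 (V * σ * star V) = V * matLog2 σ * star V := by
  have hσ' : IsSelfAdjoint σ := hσ
  have hconj' : _root_.IsSelfAdjoint (V * σ * star V) := by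
    rw [isSelfAdjoint_iff]
    simp only [StarMul.star_mul, star_star, mul_assoc, hσ'.star_eq]
  have hconj : (V * σ * star V).IsHermitian := hconj'
  have hcont : ContinuousOn (Real.logb 2) (spectrum ℝ σ) := by
    rw [continuousOn_iff_continuous_restrict]
    exact continuous_of_discreteTopology
  have hφc : Continuous (conjSAH V hV) := by
    show Continuous fun X : Matrix n n ℂ => V * X * star V
    exact (continuous_const.matrix_mul continuous_id).matrix_mul continuous_const
  have hmap := StarAlgHomClass.map_cfc (S := ℂ) (conjSAH V hV) (Real.logb 2) σ hcont hφc hσ' hconj'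
  have e1 : matLog2 σ = cfc (Real.logb 2) σ := by
    rw [matLog2, dif_pos hσ, hσ.cfc_eq]
  have e2 : matLog2 (V * σ * star V) = cfc (Real.logb 2) (V * σ * star V) := by
    rw [matLog2, dif_pos hconj, hconj.cfc_eq]
  rw [e1, e2]
  have h3 : (conjSAH V hV) σ = V * σ * star V := rfl
  rw [← h3, ← hmap]
  rfl

section pinch

variable {k : ℕ} {ω : ℂ}

lemma aux_omega_conj (hk : 0 < k) (hω : IsPrimitiveRoot ω k) :
    ω * (starRingEnd ℂ) ω = 1 := by
  rw [Complex.mul_conj]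
  norm_cast
  rw [Complex.normSq_eq_norm_sq, hω.norm'_eq_one hk.ne']
  norm_num

lemma aux_coeff (hk : 0 < k) (hω : IsPrimitiveRoot ω k) (i l : Fin k) :
    ∑ j : Fin k, (ω ^ ((i : ℕ) * (j : ℕ)) * (starRingEnd ℂ) (ω ^ ((l : ℕ) * (j : ℕ))))
      = if i = l then (k : ℂ) else 0 := by
  have hωc : ω * (starRingEnd ℂ) ω = 1 := aux_omega_conj hk hω
  set c := (starRingEnd ℂ) ω with hc
  have hterm : ∀ j : Fin k,
      ω ^ ((i : ℕ) * (j : ℕ)) * (starRingEnd ℂ) (ω ^ ((l : ℕ) * (j : ℕ)))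
        = (ω ^ (i : ℕ) * c ^ (l : ℕ)) ^ (j : ℕ) := by
    intro j
    rw [map_pow, pow_mul, pow_mul, ← mul_pow]
  simp only [hterm]
  rw [Fin.sum_univ_eq_sum_range (fun j => (ω ^ (i : ℕ) * c ^ (l : ℕ)) ^ j) k]
  by_cases hil : i = l
  · subst hil
    have : ω ^ (i : ℕ) * c ^ (i : ℕ) = 1 := by
      rw [← mul_pow, hωc, one_pow]
    simp [this]
  · have hz1 : ω ^ (i : ℕ) * c ^ (l : ℕ) ≠ 1 := by
      intro h
      have : ω ^ (i : ℕ) = ω ^ (l : ℕ) := by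
        have := congrArg (· * ω ^ (l : ℕ)) h
        simp only [one_mul] at this
        calc ω ^ (i : ℕ) = ω ^ (i : ℕ) * (c ^ (l : ℕ) * ω ^ (l : ℕ)) := by
              rw [← mul_pow, mul_comm c ω, hωc, one_pow, mul_one]
          _ = ω ^ (l : ℕ) := by rw [← mul_assoc, this]
      exact hil (Fin.ext (hω.pow_inj i.isLt l.isLt this))
    have hzk : (ω ^ (i : ℕ) * c ^ (l : ℕ)) ^ k = 1 := by
      rw [mul_pow, ← pow_mul, ← pow_mul, mul_comm (i : ℕ) k, mul_comm (l : ℕ) k,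
        pow_mul, pow_mul, hω.pow_eq_one, hc, ← map_pow, hω.pow_eq_one]
      simp
    rw [geom_sum_eq hz1, hzk]
    simp [hil]

variable (Q : Fin k → Matrix n n ℂ)

lemma aux_expand (hherm : ∀ i, (Q i).IsHermitian) (X : Matrix n n ℂ) (j : Fin k) :
    (∑ i : Fin k, ω ^ ((i : ℕ) * (j : ℕ)) • Q i) * X * star (∑ i : Fin k, ω ^ ((i : ℕ) * (j : ℕ)) • Q i)
      = ∑ i : Fin k, ∑ l : Fin k, (ω ^ ((i : ℕ) * (j : ℕ)) * (starRingEnd ℂ) (ω ^ ((l : ℕ) * (j : ℕ))))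
          • (Q i * X * Q l) := by
  have hstar : star (∑ i : Fin k, ω ^ ((i : ℕ) * (j : ℕ)) • Q i)
      = ∑ i : Fin k, (starRingEnd ℂ) (ω ^ ((i : ℕ) * (j : ℕ))) • Q i := by
    rw [star_sum]
    refine Finset.sum_congr rfl fun i _ => ?_
    rw [star_smul]
    congr 1
    rw [Matrix.star_eq_conjTranspose]
    exact hherm i
  rw [hstar, Finset.sum_mul, Finset.sum_mul]
  refine Finset.sum_congr rfl fun i _ => ?_
  rw [Finset.mul_sum]
  refine Finset.sum_congr rfl fun l _ => ?_
  rw [smul_mul_assoc, smul_mul_assoc, mul_smul_comm, smul_smul]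

lemma aux_pinch_unitary (hk : 0 < k) (hω : IsPrimitiveRoot ω k)
    (hherm : ∀ i, (Q i).IsHermitian)
    (horth : ∀ i l, Q i * Q l = if i = l then Q i else 0)
    (hsum : ∑ i, Q i = 1) (j : Fin k) :
    (∑ i : Fin k, ω ^ ((i : ℕ) * (j : ℕ)) • Q i) ∈ Matrix.unitaryGroup n ℂ := by
  rw [Matrix.mem_unitaryGroup_iff]
  have hexp := aux_expand (ω := ω) Q hherm 1 j
  rw [mul_one] at hexp
  rw [hexp]
  have hωc : ω * (starRingEnd ℂ) ω = 1 := aux_omega_conj hk hω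
  have hone : ∀ m : ℕ, ω ^ m * (starRingEnd ℂ) (ω ^ m) = 1 := by
    intro m
    rw [map_pow, ← mul_pow, hωc, one_pow]
  have hmain : ∀ i : Fin k, ∑ l : Fin k,
      (ω ^ ((i : ℕ) * (j : ℕ)) * (starRingEnd ℂ) (ω ^ ((l : ℕ) * (j : ℕ))))
      • (Q i * 1 * Q l) = Q i := by
    intro i
    rw [Finset.sum_eq_single i]
    · rw [mul_one, horth i i, if_pos rfl, hone, one_smul]
    · intro l _ hl
      rw [mul_one, horth i l, if_neg (Ne.symm hl), smul_zero]
    · intro h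
      exact absurd (Finset.mem_univ i) h
  rw [Finset.sum_congr rfl fun i _ => hmain i, hsum]

lemma aux_pinch_sum (hk : 0 < k) (hω : IsPrimitiveRoot ω k)
    (hherm : ∀ i, (Q i).IsHermitian)
    (horth : ∀ i l, Q i * Q l = if i = l then Q i else 0)
    (X : Matrix n n ℂ) :
    ∑ j : Fin k, (∑ i : Fin k, ω ^ ((i : ℕ) * (j : ℕ)) • Q i) * X *
        star (∑ i : Fin k, ω ^ ((i : ℕ) * (j : ℕ)) • Q i)
      = (k : ℂ) • ∑ i, Q i * X * Q i := by
  simp only [aux_expand (ω := ω) Q hherm X]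
  rw [Finset.sum_comm]
  have h1 : ∀ i : Fin k, ∑ j : Fin k, ∑ l : Fin k,
      (ω ^ ((i : ℕ) * (j : ℕ)) * (starRingEnd ℂ) (ω ^ ((l : ℕ) * (j : ℕ)))) • (Q i * X * Q l)
      = (k : ℂ) • (Q i * X * Q i) := by
    intro i
    rw [Finset.sum_comm]
    have h2 : ∀ l : Fin k, ∑ j : Fin k,
        (ω ^ ((i : ℕ) * (j : ℕ)) * (starRingEnd ℂ) (ω ^ ((l : ℕ) * (j : ℕ)))) • (Q i * X * Q l)
        = (if i = l then (k : ℂ) else 0) • (Q i * X * Q l) := by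
      intro l
      rw [← Finset.sum_smul, aux_coeff hk hω i l]
    rw [Finset.sum_congr rfl fun l _ => h2 l, Finset.sum_eq_single i]
    · rw [if_pos rfl]
    · intro l _ hl
      rw [if_neg (Ne.symm hl), zero_smul]
    · intro h
      exact absurd (Finset.mem_univ i) h
  rw [Finset.sum_congr rfl fun i _ => h1 i, Finset.smul_sum]

end pinch

/-- If `𝒮` is a nonempty set of positive definite density matrices on
ℂ^{dA} ⊗ ℂ^{dB}, invariant under conjugation by product unitaries, and `E(τ) = inf_{σ∈𝒮} S(τ‖σ)`,
then for any local dephasing `Λ` of the first factor (given by pairwise orthogonal projections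
`P i` summing to the identity) and any density matrix `ρ`:
`E(ρ) − E(Λ(ρ)) ≤ S(Λ(ρ)) − S(ρ)`. -/
theorem relEnt_dist_decrease_le_entropy_increase_of_local_dephasing
    {dA dB k : ℕ}
    (𝒮 : Set (Matrix (Fin dA × Fin dB) (Fin dA × Fin dB) ℂ))
    (h𝒮ne : 𝒮.Nonempty)
    (h𝒮 : ∀ σ ∈ 𝒮, σ.PosDef ∧ σ.trace = 1)
    (h𝒮inv : ∀ (UA : Matrix (Fin dA) (Fin dA) ℂ) (UB : Matrix (Fin dB) (Fin dB) ℂ),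
      UA ∈ Matrix.unitaryGroup (Fin dA) ℂ → UB ∈ Matrix.unitaryGroup (Fin dB) ℂ →
      ∀ σ ∈ 𝒮, (UA ⊗ₖ UB) * σ * (UA ⊗ₖ UB)ᴴ ∈ 𝒮)
    (E : Matrix (Fin dA × Fin dB) (Fin dA × Fin dB) ℂ → ℝ)
    (hE : ∀ τ, E τ = sInf {r : ℝ | ∃ σ ∈ 𝒮, r = relEnt τ σ})
    (P : Fin k → Matrix (Fin dA) (Fin dA) ℂ)
    (hPherm : ∀ i, (P i).IsHermitian)
    (hPidem : ∀ i, P i * P i = P i)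
    (hPorth : ∀ i j, i ≠ j → P i * P j = 0)
    (hPsum : ∑ i, P i = 1)
    (Λ : Matrix (Fin dA × Fin dB) (Fin dA × Fin dB) ℂ →
         Matrix (Fin dA × Fin dB) (Fin dA × Fin dB) ℂ)
    (hΛ : ∀ τ, Λ τ = ∑ i, (P i ⊗ₖ (1 : Matrix (Fin dB) (Fin dB) ℂ)) * τ *
        (P i ⊗ₖ (1 : Matrix (Fin dB) (Fin dB) ℂ)))
    (ρ : Matrix (Fin dA × Fin dB) (Fin dA × Fin dB) ℂ)
    (hρ : ρ.PosSemidef) (hρtr : ρ.trace = 1) :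
    E ρ - E (Λ ρ) ≤ vnEntropy (Λ ρ) - vnEntropy ρ := by
    classical
  -- positivity of dimensions
  have hdApos : 0 < dA := by
    rcases Nat.eq_zero_or_pos dA with h | h
    · subst h
      rw [Matrix.trace] at hρtr
      simp at hρtr
    · exact h
  have hdBpos : 0 < dB := by
    rcases Nat.eq_zero_or_pos dB with h | h
    · subst h
      rw [Matrix.trace] at hρtr
      simp at hρtr
    · exact h
  have hkpos : 0 < k := by
    rcases Nat.eq_zero_or_pos k with h | h
    · subst h
      rw [Finset.univ_eq_empty, Finset.sum_empty] at hPsum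
      have := congrFun (congrFun hPsum ⟨0, hdApos⟩) ⟨0, hdApos⟩
      simp [Matrix.one_apply] at this
    · exact h
  -- the projections on the big space
  set Q : Fin k → Matrix (Fin dA × Fin dB) (Fin dA × Fin dB) ℂ :=
    fun i => P i ⊗ₖ (1 : Matrix (Fin dB) (Fin dB) ℂ) with hQdef
  have hkCT : ∀ (A : Matrix (Fin dA) (Fin dA) ℂ),
      (A ⊗ₖ (1 : Matrix (Fin dB) (Fin dB) ℂ))ᴴ = Aᴴ ⊗ₖ (1 : Matrix (Fin dB) (Fin dB) ℂ) := by
    intro A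
    ext ⟨a, b⟩ ⟨c, d⟩
    simp only [Matrix.conjTranspose_apply, Matrix.kroneckerMap_apply, Matrix.one_apply]
    by_cases hbd : b = d
    · subst hbd; simp
    · have hdb : ¬ d = b := fun h => hbd h.symm
      simp [hbd, hdb]
  have hQherm : ∀ i, (Q i).IsHermitian := by
    intro i
    show (P i ⊗ₖ (1 : Matrix (Fin dB) (Fin dB) ℂ))ᴴ = P i ⊗ₖ (1 : Matrix (Fin dB) (Fin dB) ℂ)
    rw [hkCT, (hPherm i).eq]
  have hQorth : ∀ i l, Q i * Q l = if i = l then Q i else 0 := by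
    intro i l
    show (P i ⊗ₖ (1 : Matrix (Fin dB) (Fin dB) ℂ)) * (P l ⊗ₖ (1 : Matrix (Fin dB) (Fin dB) ℂ)) = _
    rw [← Matrix.mul_kronecker_mul, one_mul]
    by_cases h : i = l
    · subst h
      rw [hPidem, if_pos rfl]
    · rw [hPorth i l h, if_neg h, Matrix.zero_kronecker]
  have hQsum : ∑ i, Q i = 1 := by
    have h1 : (∑ i, P i) ⊗ₖ (1 : Matrix (Fin dB) (Fin dB) ℂ) = ∑ i, Q i := by
      ext ⟨a, b⟩ ⟨c, d⟩
      simp [hQdef, Matrix.kroneckerMap_apply, Matrix.sum_apply, Finset.sum_mul]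
    rw [← h1, hPsum, Matrix.one_kronecker_one]
  -- the dephasing of ρ
  have hΛρ : Λ ρ = ∑ i, Q i * ρ * Q i := hΛ ρ
  have hΛherm : (Λ ρ).IsHermitian := by
    rw [hΛρ]
    show (∑ i, Q i * ρ * Q i)ᴴ = ∑ i, Q i * ρ * Q i
    rw [Matrix.conjTranspose_sum]
    refine Finset.sum_congr rfl fun i _ => ?_
    rw [Matrix.conjTranspose_mul, Matrix.conjTranspose_mul, (hQherm i).eq, hρ.1.eq]
    rw [mul_assoc]
  -- lower boundedness of the relative-entropy sets
  have hbdd : ∀ (τ : Matrix (Fin dA × Fin dB) (Fin dA × Fin dB) ℂ), τ.PosSemidef →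
      BddBelow {r : ℝ | ∃ σ ∈ 𝒮, r = relEnt τ σ} := by
    intro τ hτ
    refine ⟨((τ * matLog2 τ).trace).re, ?_⟩
    rintro r ⟨σ, hσS, rfl⟩
    have hneg := aux_trace_mul_psd_nonneg hτ (aux_neg_matLog2_psd (h𝒮 σ hσS).1 (h𝒮 σ hσS).2)
    rw [mul_neg, Matrix.trace_neg, Complex.neg_re] at hneg
    rw [relEnt]
    linarith
  -- pick a near-minimizer for Λ ρ
  rw [sub_le_iff_le_add]
  refine le_of_forall_pos_le_add fun ε hε => ?_
  obtain ⟨σ0, hσ0⟩ := h𝒮ne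
  have hTne : {r : ℝ | ∃ σ ∈ 𝒮, r = relEnt (Λ ρ) σ}.Nonempty :=
    ⟨relEnt (Λ ρ) σ0, σ0, hσ0, rfl⟩
  obtain ⟨r, hrmem, hrlt⟩ := Real.lt_sInf_add_pos hTne hε
  obtain ⟨σ, hσS, rfl⟩ := hrmem
  have hσPD : σ.PosDef := (h𝒮 σ hσS).1
  have hσH : σ.IsHermitian := hσPD.1
  -- the pinching unitaries
  set ω : ℂ := Complex.exp (2 * Real.pi * Complex.I / k) with hωdef
  have hω : IsPrimitiveRoot ω k := Complex.isPrimitiveRoot_exp k hkpos.ne'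
  set W : Fin k → Matrix (Fin dA × Fin dB) (Fin dA × Fin dB) ℂ :=
    fun j => ∑ i : Fin k, ω ^ ((i : ℕ) * (j : ℕ)) • Q i with hWdef
  set UA : Fin k → Matrix (Fin dA) (Fin dA) ℂ :=
    fun j => ∑ i : Fin k, ω ^ ((i : ℕ) * (j : ℕ)) • P i with hUAdef
  have hWkron : ∀ j, W j = UA j ⊗ₖ (1 : Matrix (Fin dB) (Fin dB) ℂ) := by
    intro j
    rw [hWdef, hUAdef]
    ext ⟨a, b⟩ ⟨c, d⟩
    simp [hQdef, Matrix.kroneckerMap_apply, Matrix.sum_apply, Matrix.smul_apply, Finset.sum_mul,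
      smul_eq_mul, mul_assoc]
  have hPorth' : ∀ i l, P i * P l = if i = l then P i else 0 := by
    intro i l
    by_cases h : i = l
    · subst h; rw [hPidem, if_pos rfl]
    · rw [hPorth i l h, if_neg h]
  have hUAunit : ∀ j, UA j ∈ Matrix.unitaryGroup (Fin dA) ℂ := fun j =>
    aux_pinch_unitary (Q := P) hkpos hω hPherm hPorth' hPsum j
  have hWunit : ∀ j, W j ∈ Matrix.unitaryGroup (Fin dA × Fin dB) ℂ := fun j =>
    aux_pinch_unitary (Q := Q) hkpos hω hQherm hQorth hQsum j
  -- the twirled states belong to 𝒮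
  have hσjS : ∀ j, W j * σ * star (W j) ∈ 𝒮 := by
    intro j
    have h1 := h𝒮inv (UA j) 1 (hUAunit j) (one_mem _) σ hσS
    rw [hWkron j, Matrix.star_eq_conjTranspose]
    exact h1
  -- log of the twirled states
  have hlog : ∀ j, matLog2 (W j * σ * star (W j)) = W j * matLog2 σ * star (W j) :=
    fun j => aux_matLog2_conj (hWunit j) hσH
  have hpinch : ∑ j : Fin k, W j * matLog2 σ * star (W j)
      = (k : ℂ) • ∑ i, Q i * matLog2 σ * Q i :=
    aux_pinch_sum (Q := Q) hkpos hω hQherm hQorth (matLog2 σ)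
  have ht1 : ((Λ ρ) * matLog2 σ).trace = (ρ * ∑ i, Q i * matLog2 σ * Q i).trace := by
    rw [hΛρ, Finset.sum_mul, Matrix.trace_sum, Finset.mul_sum, Matrix.trace_sum]
    refine Finset.sum_congr rfl fun i _ => ?_
    have e1 : Q i * ρ * Q i * matLog2 σ = Q i * (ρ * (Q i * matLog2 σ)) := by noncomm_ring
    have e2 : (ρ * (Q i * matLog2 σ)) * Q i = ρ * (Q i * matLog2 σ * Q i) := by noncomm_ring
    rw [e1, Matrix.trace_mul_comm, e2]
  have ht2 : ∑ j : Fin k, (ρ * matLog2 (W j * σ * star (W j))).trace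
      = (k : ℂ) * ((Λ ρ) * matLog2 σ).trace := by
    calc ∑ j : Fin k, (ρ * matLog2 (W j * σ * star (W j))).trace
        = ∑ j : Fin k, (ρ * (W j * matLog2 σ * star (W j))).trace := by
          refine Finset.sum_congr rfl fun j _ => ?_
          rw [hlog j]
      _ = (ρ * ∑ j : Fin k, W j * matLog2 σ * star (W j)).trace := by
          rw [Finset.mul_sum, Matrix.trace_sum]
      _ = (ρ * ((k : ℂ) • ∑ i, Q i * matLog2 σ * Q i)).trace := by rw [hpinch]
      _ = (k : ℂ) * ((Λ ρ) * matLog2 σ).trace := by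
          rw [mul_smul_comm, Matrix.trace_smul, smul_eq_mul, ht1]
  have hsum_re : ∑ j : Fin k, (ρ * matLog2 (W j * σ * star (W j))).trace.re
      = (k : ℝ) * ((Λ ρ) * matLog2 σ).trace.re := by
    have h := congrArg Complex.re ht2
    rw [Complex.re_sum] at h
    rw [h, Complex.mul_re]
    simp
  haveI : Nonempty (Fin k) := ⟨⟨0, hkpos⟩⟩
  obtain ⟨j0, -, hj0⟩ := Finset.exists_le_of_sum_le (s := (Finset.univ : Finset (Fin k)))
    (f := fun _ => ((Λ ρ) * matLog2 σ).trace.re)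
    (g := fun j => (ρ * matLog2 (W j * σ * star (W j))).trace.re)
    Finset.univ_nonempty
    (by
      rw [hsum_re, Finset.sum_const, Finset.card_univ, Fintype.card_fin, nsmul_eq_mul])
  have hEρ : E ρ ≤ relEnt ρ (W j0 * σ * star (W j0)) := by
    rw [hE ρ]
    exact csInf_le (hbdd ρ hρ) ⟨W j0 * σ * star (W j0), hσjS j0, rfl⟩
  have eρ : relEnt ρ (W j0 * σ * star (W j0))
      = -vnEntropy ρ - (ρ * matLog2 (W j0 * σ * star (W j0))).trace.re := by
    rw [relEnt, aux_trace_matLog2 hρ.1]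
  have eΛ : relEnt (Λ ρ) σ = -vnEntropy (Λ ρ) - ((Λ ρ) * matLog2 σ).trace.re := by
    rw [relEnt, aux_trace_matLog2 hΛherm]
  rw [hE (Λ ρ)]
  linarith
end

section
/- Let ρ_iso = λ |φ_max⟩⟨φ_max| + (1−λ)(1/d²) I be an isotropic state on ℂ^d ⊗ ℂ^d, where |φ_max⟩ = (1/√d) ∑_{k=1}^d |kk⟩ and 0 ≤ λ ≤ 1. Then for every orthonormal basis {e_1,…,e_d} of the first factor, the dephased state ∑_i (|e_i⟩⟨e_i| ⊗ I) ρ_iso (|e_i⟩⟨e_i| ⊗ I) has von Neumann entropy equal to log₂ d − (λ + (1−λ)/d) log₂(λ + (1−λ)/d) − (d−1)·((1−λ)/d)·log₂((1−λ)/d); in particular this value is independent of the chosen basis. -/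
open Matrix
open scoped Kronecker ComplexOrder

/-- The maximally entangled vector `(1/√d) ∑_k |kk⟩` in ℂ^d ⊗ ℂ^d. -/
noncomputable def phiMax (d : ℕ) : Fin d × Fin d → ℂ := fun x =>
  if x.1 = x.2 then ((1 / Real.sqrt d : ℝ) : ℂ) else 0

section AuxLemmas
open Polynomial

lemma charpoly_conj_aux {n R : Type*} [Fintype n] [DecidableEq n] [CommRing R]
    (U V B : Matrix n n R) (h1 : U * V = 1) :
    (U * B * V).charpoly = B.charpoly := by
  let f := (C : R →+* R[X]).mapMatrix (m := n)
  have hmap : f U * f V = 1 := by rw [← _root_.map_mul, h1, _root_.map_one]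
  have hscal : f U * Matrix.scalar n (X : R[X]) * f V = Matrix.scalar n (X : R[X]) := by
    rw [← (Matrix.scalar_commute (X : R[X]) (fun r' => Commute.all _ _) (f U)).eq,
      mul_assoc, hmap, mul_one]
  have hch : charmatrix (U * B * V) = f U * charmatrix B * f V := by
    show Matrix.scalar n (X : R[X]) - f (U * B * V) = _
    rw [_root_.map_mul, _root_.map_mul]
    show _ = f U * ((scalar n) X - f B) * f V
    rw [Matrix.mul_sub, Matrix.sub_mul, hscal]
  have : (U * B * V).charpoly = (f U * charmatrix B * f V).det := by
    rw [Matrix.charpoly, hch]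
  rw [this, Matrix.det_mul, Matrix.det_mul, Matrix.charpoly]
  have : (f U).det * (f V).det = 1 := by rw [← Matrix.det_mul, hmap, Matrix.det_one]
  calc (f U).det * (charmatrix B).det * (f V).det
      = (charmatrix B).det * ((f U).det * (f V).det) := by ring
    _ = (charmatrix B).det := by rw [this, mul_one]

lemma charpoly_diagonal_aux {n R : Type*} [Fintype n] [DecidableEq n] [CommRing R]
    (v : n → R) : (Matrix.diagonal v).charpoly = ∏ i, (X - C (v i)) := by
  rw [Matrix.charpoly]
  have : charmatrix (Matrix.diagonal v) = Matrix.diagonal (fun i => X - C (v i)) := by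
    ext i j
    by_cases h : i = j
    · subst h; simp [charmatrix_apply]
    · simp [charmatrix_apply, Matrix.diagonal_apply_ne _ h, h]
  rw [this, Matrix.det_diagonal]

lemma sum_f_eigenvalues {n : Type*} [Fintype n] [DecidableEq n]
    {A : Matrix n n ℂ} (hA : A.IsHermitian) (μ : n → ℝ) (U : Matrix n n ℂ)
    (hU : U * star U = 1)
    (hAU : A = U * Matrix.diagonal (fun i => (μ i : ℂ)) * star U) (f : ℝ → ℝ) :
    ∑ i, f (hA.eigenvalues i) = ∑ i, f (μ i) := by
  classical
  -- charpoly equalities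
  have h1 : A.charpoly = ∏ i, (X - C ((μ i : ℂ))) := by
    rw [hAU, charpoly_conj_aux _ _ _ hU, charpoly_diagonal_aux]
  have hV : (hA.eigenvectorUnitary : Matrix n n ℂ) * star (hA.eigenvectorUnitary : Matrix n n ℂ) = 1 :=
    Matrix.mem_unitaryGroup_iff.mp hA.eigenvectorUnitary.2
  have h2 : A.charpoly = ∏ i, (X - C ((hA.eigenvalues i : ℂ))) := by
    conv_lhs => rw [hA.spectral_theorem]
    rw [Unitary.conjStarAlgAut_apply, charpoly_conj_aux _ _ _ hV, charpoly_diagonal_aux]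
    rfl
  -- multiset of roots
  have hroots : ∀ (g : n → ℝ), (∏ i, (X - C ((g i : ℂ)))).roots
      = (Finset.univ.val.map (fun i => ((g i : ℂ)))) := by
    intro g
    rw [Finset.prod_eq_multiset_prod]
    have : Multiset.map (fun i => X - C ((g i : ℂ))) Finset.univ.val
        = Multiset.map (fun a => X - C a) (Finset.univ.val.map (fun i => ((g i : ℂ)))) := by
      rw [Multiset.map_map]; rfl
    rw [this]
    exact Polynomial.roots_multiset_prod_X_sub_C _
  have hmC : Finset.univ.val.map (fun i => ((hA.eigenvalues i : ℂ)))
      = Finset.univ.val.map (fun i => ((μ i : ℂ))) := by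
    rw [← hroots, ← hroots, ← h1, ← h2]
  have hmR : Finset.univ.val.map hA.eigenvalues = Finset.univ.val.map μ := by
    have := congrArg (Multiset.map Complex.re) hmC
    simpa [Multiset.map_map, Function.comp] using this
  calc ∑ i, f (hA.eigenvalues i)
      = ((Finset.univ.val.map hA.eigenvalues).map f).sum := by
        rw [Multiset.map_map]; rfl
    _ = ((Finset.univ.val.map μ).map f).sum := by rw [hmR]
    _ = ∑ i, f (μ i) := by rw [Multiset.map_map]; rfl

end AuxLemmas

/-- For the isotropic state
`ρ_iso = λ |φ_max⟩⟨φ_max| + (1−λ)(1/d²) I`, dephasing the first factor in any orthonormal basis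
yields a state of entropy `log₂ d − (λ+(1−λ)/d) log₂(λ+(1−λ)/d) − (d−1)((1−λ)/d) log₂((1−λ)/d)`,
independently of the chosen basis. -/
theorem entropy_of_dephased_isotropic
    {d : ℕ} (hd : 0 < d) (l : ℝ) (hl0 : 0 ≤ l) (hl1 : l ≤ 1)
    (ρiso : Matrix (Fin d × Fin d) (Fin d × Fin d) ℂ)
    (hρ : ρiso = (l : ℂ) • vecMulVec (phiMax d) (star (phiMax d)) +
        (((1 - l) / (d ^ 2 : ℝ) : ℝ) : ℂ) • (1 : Matrix (Fin d × Fin d) (Fin d × Fin d) ℂ))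
    (e : Fin d → (Fin d → ℂ))
    (he : ∀ i j, star (e i) ⬝ᵥ e j = if i = j then 1 else 0) :
    vnEntropy (∑ i,
        (vecMulVec (e i) (star (e i)) ⊗ₖ (1 : Matrix (Fin d) (Fin d) ℂ)) * ρiso *
        (vecMulVec (e i) (star (e i)) ⊗ₖ (1 : Matrix (Fin d) (Fin d) ℂ)))
      = Real.logb 2 d
        - (l + (1 - l) / d) * Real.logb 2 (l + (1 - l) / d)
        - (d - 1) * ((1 - l) / d) * Real.logb 2 ((1 - l) / d) := by
  classical
  have hd0 : (d : ℝ) ≠ 0 := Nat.cast_ne_zero.mpr hd.ne'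
  have hd1 : (1 : ℝ) ≤ d := by exact_mod_cast hd
  set c : ℝ := (1 - l) / (d ^ 2 : ℝ) with hc
  -- orthonormality, restated
  have he' : ∀ i j, (∑ k, (starRingEnd ℂ) (e i k) * e j k) = if i = j then (1:ℂ) else 0 := by
    intro i j
    simpa [dotProduct] using he i j
  have herow : ∀ k k', (∑ i, e i k * (starRingEnd ℂ) (e i k')) = if k = k' then (1:ℂ) else 0 := by
    have hA : (Matrix.of fun k i => e i k)ᴴ * (Matrix.of fun k i => e i k) = 1 := by
      ext i j
      simpa [Matrix.mul_apply, Matrix.conjTranspose_apply, Matrix.one_apply] using he' i j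
    have hAA := mul_eq_one_comm.mp hA
    intro k k'
    have := congrArg (fun M => M k k') hAA
    simpa [Matrix.mul_apply, Matrix.conjTranspose_apply, Matrix.one_apply] using this
  -- the diagonalizing unitary
  set U : Matrix (Fin d × Fin d) (Fin d × Fin d) ℂ :=
    Matrix.of (fun p q => e q.1 p.1 * (starRingEnd ℂ) (e q.2 p.2)) with hUdef
  set μv : Fin d × Fin d → ℝ := fun q => if q.1 = q.2 then l / d + c else c with hμv
  have hU : U * star U = 1 := by
    ext p p'
    rw [Matrix.mul_apply]
    have hterm : ∀ q : Fin d × Fin d, U p q * (star U) q p'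
        = (e q.1 p.1 * (starRingEnd ℂ) (e q.1 p'.1)) *
          ((starRingEnd ℂ) (e q.2 p.2) * e q.2 p'.2) := by
      intro q
      simp only [hUdef, Matrix.star_eq_conjTranspose, Matrix.conjTranspose_apply,
        Matrix.of_apply, star_mul', RCLike.star_def, Complex.conj_conj]
      ring
    rw [Finset.sum_congr rfl fun q _ => hterm q, Fintype.sum_prod_type]
    dsimp only
    rw [← Finset.sum_mul_sum]
    have h2 : (∑ j, (starRingEnd ℂ) (e j p.2) * e j p'.2) = if p.2 = p'.2 then (1:ℂ) else 0 := by
      have := congrArg (starRingEnd ℂ) (herow p.2 p'.2)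
      rw [map_sum] at this
      simp only [_root_.map_mul, Complex.conj_conj, apply_ite (starRingEnd ℂ),
        _root_.map_one, _root_.map_zero] at this
      exact this
    rw [herow, h2, Matrix.one_apply]
    by_cases h1 : p.1 = p'.1 <;> by_cases h2 : p.2 = p'.2 <;>
      simp [Prod.ext_iff, h1, h2]
  have hs2 : ((1 / Real.sqrt d : ℝ) : ℂ) * ((1 / Real.sqrt d : ℝ) : ℂ) = ((1 / (d:ℝ) : ℝ) : ℂ) := by
    rw [← Complex.ofReal_mul]
    congr 1
    rw [div_mul_div_comm, one_mul, Real.mul_self_sqrt (by positivity)]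
  have hQ : ∀ (i : Fin d) (x y : Fin d × Fin d),
      (vecMulVec (e i) (star (e i)) ⊗ₖ (1 : Matrix (Fin d) (Fin d) ℂ)) x y
      = (e i x.1 * (starRingEnd ℂ) (e i y.1)) * (if x.2 = y.2 then 1 else 0) := by
    intro i x y
    simp [Matrix.kroneckerMap_apply, Matrix.vecMulVec_apply, Matrix.one_apply]
  have hkey : (∑ i,
        (vecMulVec (e i) (star (e i)) ⊗ₖ (1 : Matrix (Fin d) (Fin d) ℂ)) * ρiso *
        (vecMulVec (e i) (star (e i)) ⊗ₖ (1 : Matrix (Fin d) (Fin d) ℂ)))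
      = U * Matrix.diagonal (fun q => ((μv q : ℝ) : ℂ)) * star U := by
    ext p p'
    rw [Matrix.sum_apply]
    have hterm : ∀ i : Fin d,
        ((vecMulVec (e i) (star (e i)) ⊗ₖ (1 : Matrix (Fin d) (Fin d) ℂ)) * ρiso *
         (vecMulVec (e i) (star (e i)) ⊗ₖ (1 : Matrix (Fin d) (Fin d) ℂ))) p p'
        = ((l / (d:ℝ) : ℝ) : ℂ) *
            (e i p.1 * (starRingEnd ℂ) (e i p.2) * ((starRingEnd ℂ) (e i p'.1) * e i p'.2))
          + (c:ℂ) * (e i p.1 * (starRingEnd ℂ) (e i p'.1)) *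
            (if p.2 = p'.2 then 1 else 0) := by
      intro i
      have h1 : ∀ r : Fin d × Fin d,
          ((vecMulVec (e i) (star (e i)) ⊗ₖ (1 : Matrix (Fin d) (Fin d) ℂ)) * ρiso) p r
          = (l:ℂ) * ((1 / Real.sqrt d : ℝ) : ℂ) * (e i p.1 * (starRingEnd ℂ) (e i p.2)) *
              (starRingEnd ℂ) (phiMax d r)
            + (c:ℂ) * (e i p.1 * (starRingEnd ℂ) (e i r.1)) *
              (if p.2 = r.2 then 1 else 0) := by
        intro r
        have hpull : ∀ (P : Prop) [inst : Decidable P] (f : Fin d → ℂ),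
            (∑ x, if P then f x else 0) = if P then ∑ x, f x else 0 := by
          intro P inst f; split <;> simp
        rw [Matrix.mul_apply, Fintype.sum_prod_type]
        simp only [hpull, hρ, Matrix.add_apply, Matrix.smul_apply, smul_eq_mul, Matrix.one_apply,
          hQ, Matrix.vecMulVec_apply, Pi.star_apply, RCLike.star_def, phiMax, Prod.mk.injEq,
          Prod.ext_iff, ite_and, mul_add, mul_ite, ite_mul,
          mul_zero, zero_mul, mul_one, one_mul, zero_add, add_zero, Finset.sum_add_distrib,
          Finset.sum_ite_eq, Finset.sum_ite_eq', Finset.mem_univ, if_true, Complex.conj_ofReal]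
        congr 1
        · ring
        · split <;> ring
      rw [Matrix.mul_apply]
      rw [Finset.sum_congr rfl fun r _ => by rw [h1 r, hQ i r p']]
      have hpull2 : ∀ (P : Prop) [inst : Decidable P] (f : Fin d → ℂ),
          (∑ x, if P then f x else 0) = if P then ∑ x, f x else 0 := by
        intro P inst f; split <;> simp
      rw [Fintype.sum_prod_type]
      simp only [hpull2, phiMax, apply_ite (starRingEnd ℂ), _root_.map_zero, Complex.conj_ofReal,
        add_mul, mul_add, mul_ite, ite_mul, zero_mul, mul_zero, mul_one, one_mul,
        Finset.sum_add_distrib, Finset.sum_ite_eq, Finset.sum_ite_eq', Finset.mem_univ, if_true]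
      congr 1
      · rw [show ((l / (d:ℝ) : ℝ) : ℂ) = (l:ℂ) * ((1 / (d:ℝ) : ℝ) : ℂ) by push_cast; ring, ← hs2]
        ring
      · split
        · rw [show (∑ x, (c:ℂ) * (e i p.1 * (starRingEnd ℂ) (e i x)) * (e i x * (starRingEnd ℂ) (e i p'.1)))
            = (∑ x, (starRingEnd ℂ) (e i x) * e i x) * ((c:ℂ) * (e i p.1 * (starRingEnd ℂ) (e i p'.1))) by
              rw [Finset.sum_mul]; exact Finset.sum_congr rfl fun x _ => by ring]
          rw [he' i i, if_pos rfl, one_mul]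
        · rfl
    rw [Finset.sum_congr rfl fun i _ => hterm i, Finset.sum_add_distrib, ← Finset.mul_sum,
      ← Finset.sum_mul, ← Finset.mul_sum, herow p.1 p'.1]
    -- RHS
    rw [Matrix.mul_apply]
    have hRterm : ∀ q : Fin d × Fin d, (U * Matrix.diagonal (fun q => ((μv q : ℝ) : ℂ))) p q *
        (star U) q p'
        = (c:ℂ) * (U p q * (starRingEnd ℂ) (U p' q))
          + (if q.1 = q.2 then ((l / (d:ℝ) : ℝ) : ℂ) *
              (U p q * (starRingEnd ℂ) (U p' q)) else 0) := by
      intro q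
      rw [Matrix.mul_diagonal]
      simp only [Matrix.star_eq_conjTranspose, Matrix.conjTranspose_apply, RCLike.star_def, hμv]
      by_cases h : q.1 = q.2
      · simp only [h, if_pos rfl, if_true]
        push_cast
        ring
      · simp only [h, if_false]
        ring
    rw [Finset.sum_congr rfl fun q _ => hRterm q, Finset.sum_add_distrib, ← Finset.mul_sum]
    have hUU : (∑ q, U p q * (starRingEnd ℂ) (U p' q))
        = (if p.1 = p'.1 then 1 else 0) * (if p.2 = p'.2 then 1 else 0) := by
      have := congrArg (fun M => M p p') hU
      simp only [Matrix.mul_apply, Matrix.star_eq_conjTranspose, Matrix.conjTranspose_apply,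
        RCLike.star_def, Matrix.one_apply] at this
      rw [this]
      by_cases h1 : p.1 = p'.1 <;> by_cases h2 : p.2 = p'.2 <;>
        simp [Prod.ext_iff, h1, h2]
    rw [hUU]
    have hdiagsum : (∑ q : Fin d × Fin d, if q.1 = q.2 then ((l / (d:ℝ) : ℝ) : ℂ) *
          (U p q * (starRingEnd ℂ) (U p' q)) else 0)
        = ((l / (d:ℝ) : ℝ) : ℂ) * ∑ i, (e i p.1 * (starRingEnd ℂ) (e i p.2) *
            ((starRingEnd ℂ) (e i p'.1) * e i p'.2)) := by
      rw [Fintype.sum_prod_type, Finset.mul_sum]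
      apply Finset.sum_congr rfl
      intro i _
      rw [Finset.sum_eq_single i]
      · simp only [hUdef, Matrix.of_apply, if_pos rfl, _root_.map_mul, Complex.conj_conj, if_true]
      · intro j _ hj
        simp [Ne.symm hj]
      · intro h; exact absurd (Finset.mem_univ i) h
    rw [hdiagsum]
    ring
  have hdiagH : (Matrix.diagonal (fun q => ((μv q : ℝ) : ℂ))).IsHermitian :=
    Matrix.isHermitian_diagonal_of_self_adjoint _ (by
      funext q; simp [Pi.star_apply, Complex.conj_ofReal])
  have hherm : (U * Matrix.diagonal (fun q => ((μv q : ℝ) : ℂ)) * star U).IsHermitian := by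
    have := Matrix.isHermitian_mul_mul_conjTranspose U hdiagH
    simpa [Matrix.star_eq_conjTranspose] using this
  rw [hkey, vnEntropy, dif_pos hherm]
  rw [show (∑ i, hherm.eigenvalues i * Real.logb 2 (hherm.eigenvalues i))
      = ∑ q, (fun x : ℝ => x * Real.logb 2 x) (μv q) from
    sum_f_eigenvalues hherm μv U hU rfl (fun x : ℝ => x * Real.logb 2 x)]
  -- now pure real arithmetic
  set f : ℝ → ℝ := fun x => x * Real.logb 2 x with hf
  have hsum : ∑ q : Fin d × Fin d, f (μv q)
      = d * f (l / d + c) + (d * (d - 1)) * f c := by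
    rw [Fintype.sum_prod_type]
    have hrow : ∀ i : Fin d, (∑ j : Fin d, f (μv (i, j))) = f (l / d + c) + ((d:ℝ) - 1) * f c := by
      intro i
      have h1 : ∀ j, f (μv (i, j)) = f c + (if i = j then f (l / d + c) - f c else 0) := by
        intro j
        simp only [hμv]
        by_cases h : i = j <;> simp [h] <;> ring
      simp only [h1, Finset.sum_add_distrib, Finset.sum_const, Finset.card_univ,
        Fintype.card_fin, nsmul_eq_mul, Finset.sum_ite_eq, Finset.mem_univ, if_pos]
      ring
    simp only [hrow, Finset.sum_const, Finset.card_univ, Fintype.card_fin, nsmul_eq_mul]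
    ring
  rw [hsum]
  -- final arithmetic
  set b : ℝ := (1 - l) / d with hb
  set a : ℝ := l + b with ha
  have hb0 : 0 ≤ b := div_nonneg (by linarith) (by positivity)
  have ha0 : 0 < a := by
    rcases eq_or_lt_of_le hl0 with h | h
    · have h1 : (0:ℝ) < 1 / d := by positivity
      have : b = 1 / d := by rw [hb, ← h]; ring_nf
      rw [ha, this, ← h]; linarith
    · rw [ha]; linarith
  have hbc : c = b / d := by rw [hb, hc, div_div, sq]
  have hac : l / d + c = a / d := by
    rw [ha, add_div, hbc]
  have hxy : ∀ x : ℝ, 0 ≤ x → f (x / d)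
      = (x * Real.logb 2 x - x * Real.logb 2 d) / d := by
    intro x hx
    rcases hx.eq_or_lt with h | h
    · simp [hf, ← h]
    · rw [hf]
      simp only
      rw [Real.logb_div h.ne' hd0]
      field_simp
  have hab1 : a + ((d:ℝ) - 1) * b = 1 := by rw [ha, hb]; field_simp; ring
  rw [hac, hbc, hxy a ha0.le, hxy b hb0]
  have hcanc : ∀ X : ℝ, (d:ℝ) * (X / d) = X := by
    intro X; field_simp
  calc -(↑d * ((a * Real.logb 2 a - a * Real.logb 2 ↑d) / ↑d)
        + ↑d * (↑d - 1) * ((b * Real.logb 2 b - b * Real.logb 2 ↑d) / ↑d))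
      = -((a * Real.logb 2 a - a * Real.logb 2 ↑d)
        + (↑d - 1) * ((b * Real.logb 2 b - b * Real.logb 2 ↑d))) := by
        rw [hcanc]
        rw [show (↑d:ℝ) * (↑d - 1) * ((b * Real.logb 2 b - b * Real.logb 2 ↑d) / ↑d)
          = (↑d - 1) * ((↑d:ℝ) * ((b * Real.logb 2 b - b * Real.logb 2 ↑d) / ↑d)) by ring,
          hcanc]
    _ = (a + ((d:ℝ)-1)*b) * Real.logb 2 ↑d - a * Real.logb 2 a
        - (↑d - 1) * b * Real.logb 2 b := by ring
    _ = Real.logb 2 ↑d - a * Real.logb 2 a - (↑d - 1) * b * Real.logb 2 b := by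
        rw [hab1, one_mul]
end

section
/- Let |ψ_NGHZ⟩ = (1/√N) ∑_{k=1}^N |k⟩^{⊗N} be the generalized N-party GHZ state on (ℂ^N)^{⊗N}. For every orthonormal basis {e_1,…,e_N} of one party's space ℂ^N, the state obtained by dephasing that party, ∑_i (|e_i⟩⟨e_i| ⊗ I^{⊗(N−1)}) |ψ_NGHZ⟩⟨ψ_NGHZ| (|e_i⟩⟨e_i| ⊗ I^{⊗(N−1)}), has von Neumann entropy exactly log₂ N: each outcome has probability 1/N and the conditional state of the remaining N−1 parties is pure. -/
open Matrix

/-- The generalized N-party GHZ state `(1/√N) ∑_k |k⟩^{⊗N}` on `(ℂ^N)^{⊗N}`, the latter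
realized with index set `Fin N → Fin N`. -/
noncomputable def ghzVec (N : ℕ) : (Fin N → Fin N) → ℂ := fun g =>
  if ∃ c, ∀ a, g a = c then ((1 / Real.sqrt N : ℝ) : ℂ) else 0

/-- The projector `|e_i⟩⟨e_i| ⊗ I^{⊗(N−1)}` acting on the party `j0` of `(ℂ^N)^{⊗N}`. -/
noncomputable def partyProj {N : ℕ} (j0 : Fin N) (w : Fin N → ℂ) :
    Matrix (Fin N → Fin N) (Fin N → Fin N) ℂ := fun g g' =>
  w (g j0) * star (w (g' j0)) * (if ∀ a, a ≠ j0 → g a = g' a then 1 else 0)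

lemma entropy_of_flat {n : Type*} [Fintype n] [DecidableEq n] {A : Matrix n n ℂ}
    (hA : A.IsHermitian) (c : ℝ)
    (h2 : A * A = (c : ℂ) • A) (htr : A.trace = 1) :
    vnEntropy A = - Real.logb 2 c := by
  classical
  set U : Matrix n n ℂ := (hA.eigenvectorUnitary : Matrix n n ℂ) with hU
  have hUU : star U * U = 1 := Unitary.coe_star_mul_self hA.eigenvectorUnitary
  have hUU' : U * star U = 1 := Unitary.coe_mul_star_self hA.eigenvectorUnitary
  have hD : star U * A * U = diagonal (fun i => (hA.eigenvalues i : ℂ)) :=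
    by have := hA.conjStarAlgAut_star_eigenvectorUnitary
       rw [Unitary.conjStarAlgAut_star_apply] at this; exact this
  -- D * D = c • D
  have hDD : diagonal (fun i => (hA.eigenvalues i : ℂ)) * diagonal (fun i => (hA.eigenvalues i : ℂ))
      = (c : ℂ) • diagonal (fun i => (hA.eigenvalues i : ℂ)) := by
    rw [← hD]
    calc (star U * A * U) * (star U * A * U)
        = star U * (A * ((U * star U) * (A * U))) := by simp only [mul_assoc]
      _ = star U * ((A * A) * U) := by rw [hUU', one_mul]; simp only [mul_assoc]
      _ = star U * (((c:ℂ) • A) * U) := by rw [h2]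
      _ = (c:ℂ) • (star U * A * U) := by
          simp only [Matrix.smul_mul, Matrix.mul_smul, mul_assoc]
  have hdich : ∀ i, hA.eigenvalues i = 0 ∨ hA.eigenvalues i = c := by
    intro i
    have h1 := congrFun (congrFun hDD i) i
    simp only [diagonal_mul_diagonal, Matrix.smul_apply, diagonal_apply_eq,
      Pi.mul_apply, smul_eq_mul] at h1
    have h2' : hA.eigenvalues i * hA.eigenvalues i = c * hA.eigenvalues i := by
      exact_mod_cast h1
    rcases mul_eq_mul_right_iff.mp h2' with h | h
    · exact Or.inr h
    · exact Or.inl h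
  -- trace
  have htrD : A.trace = (diagonal (fun i => (hA.eigenvalues i : ℂ))).trace := by
    rw [← hD, trace_mul_cycle, hUU', one_mul]
  have hsum : ∑ i, hA.eigenvalues i = 1 := by
    rw [htr, trace_diagonal] at htrD
    exact_mod_cast htrD.symm
  rw [vnEntropy, dif_pos hA]
  have : ∀ i ∈ Finset.univ, hA.eigenvalues i * Real.logb 2 (hA.eigenvalues i)
      = hA.eigenvalues i * Real.logb 2 c := by
    intro i _
    rcases hdich i with h | h
    · rw [h]; ring
    · rw [h]
  rw [Finset.sum_congr rfl this, ← Finset.sum_mul, hsum, one_mul]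

variable {N : ℕ}

lemma sum_update (j0 : Fin N) (g : Fin N → Fin N) (G : (Fin N → Fin N) → ℂ)
    (hG : ∀ h, ¬ (∀ a, a ≠ j0 → g a = h a) → G h = 0) :
    ∑ h, G h = ∑ t, G (Function.update g j0 t) := by
  classical
  have hinj : ∀ a ∈ Finset.univ, ∀ b ∈ Finset.univ,
      Function.update g j0 a = Function.update g j0 b → a = b := by
    intro a _ b _ hab
    have := congrFun hab j0
    simpa using this
  rw [← Finset.sum_image (s := Finset.univ) (f := G) (g := fun t => Function.update g j0 t) hinj]
  apply (Finset.sum_subset (Finset.subset_univ _) ?_).symm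
  intro h _ hh
  apply hG
  intro hcond
  apply hh
  simp only [Finset.mem_image, Finset.mem_univ, true_and]
  refine ⟨h j0, ?_⟩
  funext a
  by_cases ha : a = j0
  · subst ha; simp
  · rw [Function.update_of_ne ha]; exact hcond a ha

lemma sum_const_funs (hN : 0 < N) (G : (Fin N → Fin N) → ℂ)
    (hG : ∀ h, ¬ (∃ c, ∀ a, h a = c) → G h = 0) :
    ∑ h, G h = ∑ c, G (fun _ => c) := by
  classical
  have hinj : ∀ a ∈ (Finset.univ : Finset (Fin N)), ∀ b ∈ (Finset.univ : Finset (Fin N)),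
      (fun (_ : Fin N) => a) = (fun (_ : Fin N) => b) → a = b := by
    intro a _ b _ hab
    exact congrFun hab ⟨0, hN⟩
  rw [← Finset.sum_image (s := Finset.univ) (f := G) (g := fun c => fun (_ : Fin N) => c) hinj]
  apply (Finset.sum_subset (Finset.subset_univ _) ?_).symm
  intro h _ hh
  apply hG
  rintro ⟨c, hc⟩
  apply hh
  simp only [Finset.mem_image, Finset.mem_univ, true_and]
  exact ⟨c, by funext a; exact (hc a).symm⟩

lemma proj_mul_proj (j0 : Fin N) (e : Fin N → (Fin N → ℂ))
    (he : ∀ i j, star (e i) ⬝ᵥ e j = if i = j then 1 else 0) (i j : Fin N) :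
    partyProj j0 (e i) * partyProj j0 (e j) = if i = j then partyProj j0 (e i) else 0 := by
  classical
  ext g g'
  rw [mul_apply]
  rw [sum_update j0 g _ (by
    intro h hh
    simp only [partyProj, if_neg hh, mul_zero, zero_mul])]
  have hc1 : ∀ t : Fin N, (∀ a, a ≠ j0 → g a = Function.update g j0 t a) := by
    intro t a ha; rw [Function.update_of_ne ha]
  have hc2 : ∀ t : Fin N, (∀ a, a ≠ j0 → Function.update g j0 t a = g' a)
      ↔ (∀ a, a ≠ j0 → g a = g' a) := by
    intro t
    constructor
    · intro H a ha; rw [← Function.update_of_ne ha t g]; exact H a ha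
    · intro H a ha; rw [Function.update_of_ne ha]; exact H a ha
  have step : ∀ t : Fin N,
      partyProj j0 (e i) g (Function.update g j0 t) * partyProj j0 (e j) (Function.update g j0 t) g'
      = (star (e i) t * e j t) *
        (e i (g j0) * star (e j (g' j0)) * (if ∀ a, a ≠ j0 → g a = g' a then 1 else 0)) := by
    intro t
    simp only [partyProj, Function.update_self, if_pos (hc1 t), if_congr (hc2 t) rfl rfl,
      Pi.star_apply]
    ring
  rw [Finset.sum_congr rfl (fun t _ => step t), ← Finset.sum_mul]
  have hdot : ∑ t, star (e i) t * e j t = if i = j then 1 else 0 := he i j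
  rw [hdot]
  by_cases hij : i = j
  · subst hij; simp [partyProj]
  · simp [hij]

lemma psi_proj_psi (hN : 0 < N) (j0 : Fin N) (w : Fin N → ℂ) (hw : star w ⬝ᵥ w = 1) :
    ∑ g, ∑ g', star (ghzVec N g) * (partyProj j0 w g g' * ghzVec N g') = ((N : ℂ))⁻¹ := by
  classical
  rw [sum_const_funs hN _ (by
    intro h hh
    simp only [ghzVec, if_neg hh, star_zero, zero_mul, Finset.sum_const_zero])]
  have : ∀ c : Fin N, ∑ g', star (ghzVec N (fun _ => c)) * (partyProj j0 w (fun _ => c) g' * ghzVec N g')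
      = ∑ c', star (ghzVec N (fun _ => c)) * (partyProj j0 w (fun _ => c) (fun _ => c') * ghzVec N (fun _ => c')) := by
    intro c
    apply sum_const_funs hN
    intro h hh
    simp only [ghzVec, if_neg hh, mul_zero, zero_mul]
  rw [Finset.sum_congr rfl (fun c _ => this c)]
  have hgc : ∀ c : Fin N, ghzVec N (fun _ => c) = ((1 / Real.sqrt N : ℝ) : ℂ) := by
    intro c; simp only [ghzVec]; rw [if_pos ⟨c, fun a => rfl⟩]
  have hproj : ∀ c c' : Fin N, partyProj j0 w (fun _ => c) (fun _ => c')
      = w c * star (w c') * (if c = c' then 1 else 0) := by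
    intro c c'
    simp only [partyProj]
    congr 1
    refine if_congr ⟨fun H => ?_, fun H a _ => H⟩ rfl rfl
    by_contra hcc
    have : Nontrivial (Fin N) := ⟨⟨c, c', hcc⟩⟩
    obtain ⟨a, ha⟩ := exists_ne j0
    exact hcc (H a ha)
  have hsimp : ∀ c : Fin N, ∑ c', star (ghzVec N (fun _ => c)) * (partyProj j0 w (fun _ => c) (fun _ => c') * ghzVec N (fun _ => c'))
      = ((1 / Real.sqrt N : ℝ) : ℂ)^2 * (w c * star (w c)) := by
    intro c
    rw [Finset.sum_eq_single c]
    · rw [hgc, hproj, if_pos rfl, Complex.star_def, Complex.conj_ofReal]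
      ring
    · intro c' _ hcc
      rw [hproj, if_neg (Ne.symm hcc)]
      ring
    · intro hc; exact absurd (Finset.mem_univ c) hc
  rw [Finset.sum_congr rfl (fun c _ => hsimp c), ← Finset.mul_sum]
  have hdot : ∑ c, w c * star (w c) = 1 := by
    rw [← hw, dotProduct]
    exact Finset.sum_congr rfl (fun c _ => by simp [mul_comm])
  rw [hdot, mul_one]
  have hNne : (Real.sqrt N) ≠ 0 := by
    positivity
  rw [show ((1 / Real.sqrt N : ℝ) : ℂ)^2 = (((1 / Real.sqrt N : ℝ)^2 : ℝ) : ℂ) by push_cast; ring]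
  rw [show (1 / Real.sqrt N : ℝ)^2 = (N : ℝ)⁻¹ by
    rw [div_pow, one_pow, Real.sq_sqrt (Nat.cast_nonneg N), one_div]]
  push_cast
  ring

lemma rho_proj_rho (hN : 0 < N) (j0 : Fin N) (w : Fin N → ℂ) (hw : star w ⬝ᵥ w = 1) :
    vecMulVec (ghzVec N) (star (ghzVec N)) * partyProj j0 w * vecMulVec (ghzVec N) (star (ghzVec N))
      = ((N : ℂ))⁻¹ • vecMulVec (ghzVec N) (star (ghzVec N)) := by
  classical
  ext g g'
  simp only [mul_apply, vecMulVec_apply, Pi.star_apply, Matrix.smul_apply, smul_eq_mul]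
  rw [← psi_proj_psi hN j0 w hw]
  simp only [Finset.sum_mul, Finset.mul_sum]
  rw [Finset.sum_comm]
  refine Finset.sum_congr rfl fun h _ => Finset.sum_congr rfl fun h' _ => ?_
  ring

lemma trace_rho_proj (hN : 0 < N) (j0 : Fin N) (w : Fin N → ℂ) (hw : star w ⬝ᵥ w = 1) :
    (vecMulVec (ghzVec N) (star (ghzVec N)) * partyProj j0 w).trace = ((N : ℂ))⁻¹ := by
  classical
  rw [trace, ← psi_proj_psi hN j0 w hw]
  simp only [diag_apply, mul_apply, vecMulVec_apply, Pi.star_apply]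
  rw [Finset.sum_comm]
  refine Finset.sum_congr rfl fun h _ => Finset.sum_congr rfl fun g _ => ?_
  ring

lemma proj_isHermitian (j0 : Fin N) (w : Fin N → ℂ) : (partyProj j0 w).IsHermitian := by
  ext g g'
  simp only [conjTranspose_apply, partyProj, StarMul.star_mul, star_star, apply_ite (star : ℂ → ℂ), star_one, star_zero]
  have hiff : (∀ a, a ≠ j0 → g' a = g a) ↔ (∀ a, a ≠ j0 → g a = g' a) :=
    ⟨fun H a ha => (H a ha).symm, fun H a ha => (H a ha).symm⟩
  rw [if_congr hiff rfl rfl]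
  ring

lemma rho_isHermitian : (vecMulVec (ghzVec N) (star (ghzVec N))).IsHermitian := by
  ext g g'
  simp only [conjTranspose_apply, vecMulVec_apply, Pi.star_apply, StarMul.star_mul, star_star]

/-- Dephasing one party of the generalized N-party GHZ state in any orthonormal
basis of that party's space yields a state of von Neumann entropy exactly `log₂ N`. -/
theorem entropy_of_dephased_ghz
    {N : ℕ} (hN : 0 < N)
    (e : Fin N → (Fin N → ℂ))
    (he : ∀ i j, star (e i) ⬝ᵥ e j = if i = j then 1 else 0) :
    vnEntropy (∑ i,
        partyProj (⟨0, hN⟩ : Fin N) (e i) *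
          vecMulVec (ghzVec N) (star (ghzVec N)) *
        partyProj (⟨0, hN⟩ : Fin N) (e i))
      = Real.logb 2 N := by
  classical
  have hwi : ∀ i, star (e i) ⬝ᵥ e i = 1 := fun i => by simpa using he i i
  have hρh : (vecMulVec (ghzVec N) (star (ghzVec N))).IsHermitian := rho_isHermitian
  have hAh : (∑ i,
      partyProj (⟨0, hN⟩ : Fin N) (e i) * vecMulVec (ghzVec N) (star (ghzVec N)) *
        partyProj (⟨0, hN⟩ : Fin N) (e i)).IsHermitian := by
    show _ = _
    rw [conjTranspose_sum]
    refine Finset.sum_congr rfl fun i _ => ?_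
    rw [conjTranspose_mul, conjTranspose_mul, (proj_isHermitian (⟨0, hN⟩ : Fin N) (e i)).eq,
      hρh.eq, mul_assoc]
  have hNC : ((N : ℂ)) ≠ 0 := by
    exact_mod_cast Nat.cast_ne_zero.mpr hN.ne'
  have hA2 : (∑ i,
      partyProj (⟨0, hN⟩ : Fin N) (e i) * vecMulVec (ghzVec N) (star (ghzVec N)) *
        partyProj (⟨0, hN⟩ : Fin N) (e i)) * (∑ i,
      partyProj (⟨0, hN⟩ : Fin N) (e i) * vecMulVec (ghzVec N) (star (ghzVec N)) *
        partyProj (⟨0, hN⟩ : Fin N) (e i))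
      = (((N : ℝ)⁻¹ : ℝ) : ℂ) • (∑ i,
      partyProj (⟨0, hN⟩ : Fin N) (e i) * vecMulVec (ghzVec N) (star (ghzVec N)) *
        partyProj (⟨0, hN⟩ : Fin N) (e i)) := by
    rw [Finset.sum_mul_sum]
    have hterm : ∀ i j : Fin N,
        (partyProj (⟨0, hN⟩ : Fin N) (e i) * vecMulVec (ghzVec N) (star (ghzVec N)) *
          partyProj (⟨0, hN⟩ : Fin N) (e i)) *
        (partyProj (⟨0, hN⟩ : Fin N) (e j) * vecMulVec (ghzVec N) (star (ghzVec N)) *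
          partyProj (⟨0, hN⟩ : Fin N) (e j))
        = if i = j then ((N : ℂ))⁻¹ • (partyProj (⟨0, hN⟩ : Fin N) (e i) *
            vecMulVec (ghzVec N) (star (ghzVec N)) * partyProj (⟨0, hN⟩ : Fin N) (e i))
          else 0 := by
      intro i j
      have h1 : (partyProj (⟨0, hN⟩ : Fin N) (e i) * vecMulVec (ghzVec N) (star (ghzVec N)) *
          partyProj (⟨0, hN⟩ : Fin N) (e i)) *
        (partyProj (⟨0, hN⟩ : Fin N) (e j) * vecMulVec (ghzVec N) (star (ghzVec N)) *
          partyProj (⟨0, hN⟩ : Fin N) (e j))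
        = partyProj (⟨0, hN⟩ : Fin N) (e i) * vecMulVec (ghzVec N) (star (ghzVec N)) *
          (partyProj (⟨0, hN⟩ : Fin N) (e i) * partyProj (⟨0, hN⟩ : Fin N) (e j)) *
          (vecMulVec (ghzVec N) (star (ghzVec N)) * partyProj (⟨0, hN⟩ : Fin N) (e j)) := by
        simp only [mul_assoc]
      rw [h1, proj_mul_proj (⟨0, hN⟩ : Fin N) e he i j]
      by_cases hij : i = j
      · subst hij
        rw [if_pos rfl, if_pos rfl]
        have h2 : partyProj (⟨0, hN⟩ : Fin N) (e i) * vecMulVec (ghzVec N) (star (ghzVec N)) *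
            partyProj (⟨0, hN⟩ : Fin N) (e i) *
            (vecMulVec (ghzVec N) (star (ghzVec N)) * partyProj (⟨0, hN⟩ : Fin N) (e i))
            = partyProj (⟨0, hN⟩ : Fin N) (e i) *
              (vecMulVec (ghzVec N) (star (ghzVec N)) * partyProj (⟨0, hN⟩ : Fin N) (e i) *
                vecMulVec (ghzVec N) (star (ghzVec N))) *
              partyProj (⟨0, hN⟩ : Fin N) (e i) := by
          simp only [mul_assoc]
        rw [h2, rho_proj_rho hN (⟨0, hN⟩ : Fin N) (e i) (hwi i)]
        simp only [Matrix.mul_smul, Matrix.smul_mul]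
      · rw [if_neg hij, if_neg hij, mul_zero, zero_mul]
    rw [Finset.sum_congr rfl (fun i _ => Finset.sum_congr rfl (fun j _ => hterm i j))]
    rw [Finset.sum_congr rfl (fun i (_ : i ∈ Finset.univ) => Finset.sum_ite_eq Finset.univ i
      (fun j => ((N : ℂ))⁻¹ • (partyProj (⟨0, hN⟩ : Fin N) (e i) *
        vecMulVec (ghzVec N) (star (ghzVec N)) * partyProj (⟨0, hN⟩ : Fin N) (e i))))]
    simp only [Finset.mem_univ, if_true, ite_true, ← Finset.smul_sum]
    congr 1
    push_cast
    ring
  have htr : (∑ i,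
      partyProj (⟨0, hN⟩ : Fin N) (e i) * vecMulVec (ghzVec N) (star (ghzVec N)) *
        partyProj (⟨0, hN⟩ : Fin N) (e i)).trace = 1 := by
    rw [trace_sum]
    have hti : ∀ i : Fin N,
        (partyProj (⟨0, hN⟩ : Fin N) (e i) * vecMulVec (ghzVec N) (star (ghzVec N)) *
          partyProj (⟨0, hN⟩ : Fin N) (e i)).trace = ((N : ℂ))⁻¹ := by
      intro i
      rw [trace_mul_cycle, proj_mul_proj (⟨0, hN⟩ : Fin N) e he i i, if_pos rfl,
        trace_mul_comm]
      exact trace_rho_proj hN (⟨0, hN⟩ : Fin N) (e i) (hwi i)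
    rw [Finset.sum_congr rfl (fun i _ => hti i)]
    simp only [Finset.sum_const, Finset.card_univ, Fintype.card_fin, nsmul_eq_mul]
    field_simp
  have hflat := entropy_of_flat hAh ((N : ℝ)⁻¹) hA2 htr
  rw [hflat, Real.logb_inv, neg_neg]
end

section
/- Let |ψ_NA⟩ = (1/√(N!)) ∑_{π ∈ S_N} sgn(π) |e_{π(1)}⟩⊗…⊗|e_{π(N)}⟩ be the normalized totally antisymmetric (Aharonov) state on (ℂ^N)^{⊗N}, built from an orthonormal basis {e_1,…,e_N} of ℂ^N. Then: (a) the reduced density matrix of each single party is the maximally mixed state (1/N) I on ℂ^N; (b) for any orthonormal basis {f_1,…,f_N} of ℂ^N, if the first party is measured in this basis, each outcome f_i occurs with probability 1/N, and the conditional post-measurement state of the remaining N−1 parties is (up to a phase) the normalized totally antisymmetric state of N−1 systems built from any orthonormal basis of the (N−1)-dimensional orthogonal complement of f_i in ℂ^N. -/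
open Matrix

/-- The normalized totally antisymmetric state built from the vectors `w k ∈ ℂ^N`, one for each
party `k : ι`; it is a vector on `(ℂ^N)^{⊗ι}`, the latter realized with index set `ι → Fin N`. -/
noncomputable def antisymVec {ι : Type*} [Fintype ι] [DecidableEq ι] {N : ℕ}
    (w : ι → (Fin N → ℂ)) : (ι → Fin N) → ℂ := fun h =>
  ((1 / Real.sqrt (Nat.factorial (Fintype.card ι)) : ℝ) : ℂ) *
    ∑ π : Equiv.Perm ι, ((Equiv.Perm.sign π : ℤ) : ℂ) * ∏ k, w (π k) (h k)

/-- The reduced density matrix of party `j` of the pure state `ψ` on `(ℂ^N)^{⊗N}`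
(partial trace over all other parties). -/
noncomputable def reducedParty {N : ℕ} (ψ : (Fin N → Fin N) → ℂ) (j : Fin N) :
    Matrix (Fin N) (Fin N) ℂ := fun a b =>
  ∑ h : {k : Fin N // k ≠ j} → Fin N,
    ψ (fun k => if hk : k = j then a else h ⟨k, hk⟩) *
      star (ψ (fun k => if hk : k = j then b else h ⟨k, hk⟩))

/-- The (unnormalized) conditional state `(⟨w| ⊗ I)|ψ⟩` of the remaining parties, after party `j`
of the pure state `ψ` has been measured with outcome `w`. -/
noncomputable def condVec {N : ℕ} (ψ : (Fin N → Fin N) → ℂ) (j : Fin N) (w : Fin N → ℂ) :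
    ({k : Fin N // k ≠ j} → Fin N) → ℂ := fun h =>
  ∑ a, star (w a) * ψ (fun k => if hk : k = j then a else h ⟨k, hk⟩)


-- product split at j
lemma prod_split {N : ℕ} (j : Fin N) (F : Fin N → ℂ) :
    ∏ k, F k = F j * ∏ k : {k : Fin N // k ≠ j}, F ↑k := by
  rw [← Finset.mul_prod_erase Finset.univ F (Finset.mem_univ j)]
  congr 1
  exact Finset.prod_subtype (Finset.univ.erase j) (fun k => by simp [Finset.mem_erase]) F

lemma antisym_ext {N : ℕ} (w : Fin N → (Fin N → ℂ)) (j : Fin N) (a : Fin N)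
    (h : {k : Fin N // k ≠ j} → Fin N) :
    antisymVec w (fun k => if hk : k = j then a else h ⟨k, hk⟩)
      = ((1 / Real.sqrt (Nat.factorial (Fintype.card (Fin N))) : ℝ) : ℂ) *
        ∑ π : Equiv.Perm (Fin N), ((Equiv.Perm.sign π : ℤ) : ℂ) *
          (w (π j) a * ∏ k : {k : Fin N // k ≠ j}, w (π ↑k) (h k)) := by
  rw [antisymVec]
  congr 1
  apply Finset.sum_congr rfl
  intro π _
  congr 1
  rw [prod_split j (fun k => w (π k) (if hk : k = j then a else h ⟨k, hk⟩))]
  congr 1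
  · rw [dif_pos rfl]
  · apply Finset.prod_congr rfl
    intro k _
    rw [dif_neg k.2]

lemma condVec_antisym {N : ℕ} (w : Fin N → (Fin N → ℂ)) (j : Fin N) (v : Fin N → ℂ)
    (h : {k : Fin N // k ≠ j} → Fin N) :
    condVec (antisymVec w) j v h
      = ((1 / Real.sqrt (Nat.factorial (Fintype.card (Fin N))) : ℝ) : ℂ) *
        ∑ π : Equiv.Perm (Fin N), ((Equiv.Perm.sign π : ℤ) : ℂ) *
          ((∑ a, star (v a) * w (π j) a) * ∏ k : {k : Fin N // k ≠ j}, w (π ↑k) (h k)) := by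
  rw [condVec]
  have key : ∀ a, star (v a) * antisymVec w (fun k => if hk : k = j then a else h ⟨k, hk⟩)
      = ∑ π : Equiv.Perm (Fin N),
          ((1 / Real.sqrt (Nat.factorial (Fintype.card (Fin N))) : ℝ) : ℂ) *
          (((Equiv.Perm.sign π : ℤ) : ℂ) *
            ((star (v a) * w (π j) a) * ∏ k : {k : Fin N // k ≠ j}, w (π ↑k) (h k))) := by
    intro a
    rw [antisym_ext, Finset.mul_sum, Finset.mul_sum]
    exact Finset.sum_congr rfl fun π _ => by ring
  rw [Finset.sum_congr rfl fun a _ => key a, Finset.sum_comm, Finset.mul_sum]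
  apply Finset.sum_congr rfl
  intro π _
  conv_rhs => rw [Finset.sum_mul, Finset.mul_sum, Finset.mul_sum]

lemma antisymVec_eq_det {ι : Type*} [Fintype ι] [DecidableEq ι] {N : ℕ}
    (w : ι → (Fin N → ℂ)) (h : ι → Fin N) :
    antisymVec w h = ((1 / Real.sqrt (Nat.factorial (Fintype.card ι)) : ℝ) : ℂ) *
      (Matrix.of fun m k => w m (h k)).det := by
  rw [antisymVec, Matrix.det_apply]
  congr 1
  exact Finset.sum_congr rfl fun σ _ => by simp [Units.smul_def, zsmul_eq_mul]

lemma rows_unitary {N : ℕ} (e : Fin N → (Fin N → ℂ))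
    (he : ∀ i j, star (e i) ⬝ᵥ e j = if i = j then 1 else 0) :
    (Matrix.of fun m x => e m x) * (Matrix.of fun m x => e m x)ᴴ = 1 := by
  ext i j
  have h := he j i
  simp only [dotProduct, Pi.star_apply] at h
  simp only [Matrix.mul_apply, Matrix.conjTranspose_apply, Matrix.of_apply, Matrix.one_apply]
  rw [show (∑ x, e i x * star (e j x)) = ∑ x, star (e j x) * e i x from
    Finset.sum_congr rfl fun x _ => mul_comm _ _, h]
  simp [eq_comm]

lemma antisym_basis_change {N : ℕ} (e b : Fin N → (Fin N → ℂ))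
    (he : ∀ i j, star (e i) ⬝ᵥ e j = if i = j then 1 else 0)
    (hb : ∀ i j, star (b i) ⬝ᵥ b j = if i = j then 1 else 0) :
    ∃ u : ℂ, ‖u‖ = 1 ∧ ∀ h' : Fin N → Fin N, antisymVec e h' = u * antisymVec b h' := by
  set E : Matrix (Fin N) (Fin N) ℂ := Matrix.of fun m x => e m x with hEdef
  set B : Matrix (Fin N) (Fin N) ℂ := Matrix.of fun m x => b m x with hBdef
  have hE : E * Eᴴ = 1 := rows_unitary e he
  have hB : B * Bᴴ = 1 := rows_unitary b hb
  have hBB : Bᴴ * B = 1 := mul_eq_one_comm.mp hB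
  set U : Matrix (Fin N) (Fin N) ℂ := E * Bᴴ with hUdef
  have hUB : U * B = E := by rw [hUdef, Matrix.mul_assoc, hBB, Matrix.mul_one]
  have hUU : U * Uᴴ = 1 := by
    have hUconj : Uᴴ = B * Eᴴ := by
      rw [hUdef, Matrix.conjTranspose_mul, Matrix.conjTranspose_conjTranspose]
    rw [hUconj, hUdef, Matrix.mul_assoc, ← Matrix.mul_assoc Bᴴ B Eᴴ, hBB, Matrix.one_mul, hE]
  have hdet : U.det * star U.det = 1 := by
    have h1 := congrArg Matrix.det hUU
    rw [Matrix.det_mul, Matrix.det_one, Matrix.det_conjTranspose] at h1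
    exact h1
  refine ⟨U.det, ?_, ?_⟩
  · have h1 : Complex.normSq U.det = 1 := by
      have h2 : (Complex.normSq U.det : ℂ) = 1 := by rw [← Complex.mul_conj]; exact hdet
      exact_mod_cast h2
    rw [Complex.norm_def, h1, Real.sqrt_one]
  · intro h'
    rw [antisymVec_eq_det e h', antisymVec_eq_det b h']
    have hM : (Matrix.of fun m k => e m (h' k)) = U * (Matrix.of fun l k => b l (h' k)) := by
      ext m k
      have h3 := congrFun (congrFun hUB m) (h' k)
      rw [Matrix.mul_apply] at h3
      rw [Matrix.mul_apply]
      exact h3.symm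
    rw [hM, Matrix.det_mul]
    ring

lemma condVec_smul {N : ℕ} (ψ : (Fin N → Fin N) → ℂ) (u : ℂ) (j : Fin N) (v : Fin N → ℂ)
    (h : {k : Fin N // k ≠ j} → Fin N) :
    condVec (fun x => u * ψ x) j v h = u * condVec ψ j v h := by
  rw [condVec, condVec, Finset.mul_sum]
  exact Finset.sum_congr rfl fun a _ => by ring

lemma card_ne {N : ℕ} (j : Fin N) : Fintype.card {k : Fin N // k ≠ j} = N - 1 := by
  have h1 : Fintype.card {k : Fin N // ¬ k = j} = Fintype.card (Fin N) -
      Fintype.card {k : Fin N // k = j} := Fintype.card_subtype_compl _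
  simpa [Fintype.card_subtype_eq] using h1

lemma sum_perm_restrict {N : ℕ} (j : Fin N) (F : Fin N → {k : Fin N // k ≠ j} → ℂ) :
    ∑ π : Equiv.Perm (Fin N), ((Equiv.Perm.sign π : ℤ) : ℂ) *
        ((if π j = j then 1 else 0) * ∏ k : {k : Fin N // k ≠ j}, F (π ↑k) k)
      = ∑ τ : Equiv.Perm {k : Fin N // k ≠ j}, ((Equiv.Perm.sign τ : ℤ) : ℂ) *
          ∏ k, F ↑(τ k) k := by
  classical
  have step1 : ∑ π : Equiv.Perm (Fin N), ((Equiv.Perm.sign π : ℤ) : ℂ) *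
        ((if π j = j then 1 else 0) * ∏ k : {k : Fin N // k ≠ j}, F (π ↑k) k)
      = ∑ π ∈ Finset.univ.filter (fun π : Equiv.Perm (Fin N) => π j = j),
          ((Equiv.Perm.sign π : ℤ) : ℂ) * ∏ k : {k : Fin N // k ≠ j}, F (π ↑k) k := by
    rw [Finset.sum_filter]
    apply Finset.sum_congr rfl
    intro π _
    by_cases hπ : π j = j <;> simp [hπ]
  rw [step1]
  symm
  have hiff : ∀ (π : Equiv.Perm (Fin N)), π j = j → ∀ k : Fin N, k ≠ j ↔ π k ≠ j := by
    intro π hj k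
    constructor
    · intro hk hc
      exact hk (π.injective (hc.trans hj.symm))
    · intro hk hc
      exact hk (by rw [hc, hj])
  refine Finset.sum_bij' (fun (τ : Equiv.Perm {k : Fin N // k ≠ j}) _ => Equiv.Perm.ofSubtype τ)
    (fun π hπ => π.subtypePerm (fun k => (hiff π (Finset.mem_filter.mp hπ).2 k).symm))
    (fun τ _ => ?_) (fun π _ => Finset.mem_univ _)
    (fun τ _ => Equiv.Perm.subtypePerm_ofSubtype τ)
    (fun π hπ => ?_) (fun τ _ => ?_)
  · simp only [Finset.mem_filter, Finset.mem_univ, true_and]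
    exact Equiv.Perm.ofSubtype_apply_of_not_mem τ (by simp)
  · have hj : π j = j := (Finset.mem_filter.mp hπ).2
    apply Equiv.Perm.ofSubtype_subtypePerm
    intro x hx
    intro hc
    exact hx (by rw [hc, hj])
  · rw [Equiv.Perm.sign_ofSubtype]
    congr 1
    exact Finset.prod_congr rfl fun k _ => by rw [Equiv.Perm.ofSubtype_apply_coe]

lemma sum_prod_factor {κ : Type*} [Fintype κ] [DecidableEq κ] {N : ℕ} (F G : κ → Fin N → ℂ) :
    ∑ h : κ → Fin N, (∏ k, F k (h k)) * (∏ k, G k (h k)) = ∏ k, (∑ t, F k t * G k t) := by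
  rw [Finset.prod_univ_sum, Fintype.piFinset_univ]
  exact Finset.sum_congr rfl fun h _ => (Finset.prod_mul_distrib).symm

lemma perm_eq_of_eq_off {ι : Type*} [DecidableEq ι] (π σ : Equiv.Perm ι) (j : ι)
    (hh : ∀ k, k ≠ j → π k = σ k) : π = σ := by
  ext k
  by_cases hk : k = j
  · subst hk
    by_contra hne
    rcases eq_or_ne (σ⁻¹ (π k)) k with h | h
    · have h2 : σ (σ⁻¹ (π k)) = π k := by simp
      rw [h] at h2
      exact hne h2.symm
    · have h3 := hh _ h
      rw [show σ (σ⁻¹ (π k)) = π k by simp] at h3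
      exact h (π.injective h3)
  · exact hh k hk

lemma prod_delta_perm {N : ℕ} (e : Fin N → (Fin N → ℂ)) (j : Fin N)
    (π σ : Equiv.Perm (Fin N))
    (he' : ∀ m l, ∑ t, e m t * star (e l t) = if m = l then 1 else 0) :
    (∏ k : {k : Fin N // k ≠ j}, ∑ t, e (π ↑k) t * star (e (σ ↑k) t))
      = if π = σ then 1 else 0 := by
  by_cases hps : π = σ
  · subst hps
    rw [if_pos rfl]
    exact Finset.prod_eq_one fun k _ => by rw [he', if_pos rfl]
  · obtain ⟨k, hk, hne⟩ : ∃ k, k ≠ j ∧ π k ≠ σ k := by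
      by_contra hcon
      push_neg at hcon
      exact hps (perm_eq_of_eq_off π σ j hcon)
    rw [if_neg hps]
    apply Finset.prod_eq_zero (Finset.mem_univ (⟨k, hk⟩ : {k : Fin N // k ≠ j}))
    rw [he', if_neg hne]

lemma fiber_card_eq {N : ℕ} (j m : Fin N) :
    (Finset.univ.filter fun π : Equiv.Perm (Fin N) => π j = m).card
      = (Finset.univ.filter fun π : Equiv.Perm (Fin N) => π j = j).card := by
  apply Finset.card_bij' (fun π _ => Equiv.swap m j * π) (fun π _ => Equiv.swap m j * π)
  · intro π hπ
    simp only [Finset.mem_filter, Finset.mem_univ, true_and] at hπ ⊢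
    rw [Equiv.Perm.mul_apply, hπ, Equiv.swap_apply_left]
  · intro π hπ
    simp only [Finset.mem_filter, Finset.mem_univ, true_and] at hπ ⊢
    rw [Equiv.Perm.mul_apply, hπ, Equiv.swap_apply_right]
  · intro π _
    rw [← mul_assoc, Equiv.swap_mul_self, one_mul]
  · intro π _
    rw [← mul_assoc, Equiv.swap_mul_self, one_mul]

lemma sum_perm_eval {N : ℕ} (j : Fin N) (φ : Fin N → ℂ) :
    ∑ π : Equiv.Perm (Fin N), φ (π j)
      = ((Finset.univ.filter fun π : Equiv.Perm (Fin N) => π j = j).card : ℂ) * ∑ m, φ m := by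
  rw [← Finset.sum_fiberwise Finset.univ (fun π : Equiv.Perm (Fin N) => π j) (fun π => φ (π j)),
    Finset.mul_sum]
  apply Finset.sum_congr rfl
  intro m _
  calc ∑ π ∈ Finset.univ.filter fun π : Equiv.Perm (Fin N) => π j = m, φ (π j)
      = ∑ _π ∈ Finset.univ.filter fun π : Equiv.Perm (Fin N) => π j = m, φ m :=
        Finset.sum_congr rfl fun π hπ => by rw [(Finset.mem_filter.mp hπ).2]
    _ = ((Finset.univ.filter fun π : Equiv.Perm (Fin N) => π j = m).card : ℂ) * φ m := by
        rw [Finset.sum_const, nsmul_eq_mul]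
    _ = _ := by rw [fiber_card_eq]

lemma card_mul_fiber {N : ℕ} (j : Fin N) :
    N * (Finset.univ.filter fun π : Equiv.Perm (Fin N) => π j = j).card
      = Nat.factorial N := by
  have h := Finset.card_eq_sum_card_fiberwise
    (f := fun π : Equiv.Perm (Fin N) => π j) (s := Finset.univ) (t := Finset.univ)
    (fun x _ => Finset.mem_univ _)
  rw [Finset.card_univ, Fintype.card_perm, Fintype.card_fin] at h
  rw [h, Finset.sum_congr rfl fun m _ => fiber_card_eq j m, Finset.sum_const, smul_eq_mul,
    Finset.card_univ, Fintype.card_fin, mul_comm]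

lemma rows_complete {N : ℕ} (e : Fin N → (Fin N → ℂ))
    (he : ∀ i j, star (e i) ⬝ᵥ e j = if i = j then 1 else 0) :
    ∀ a b, ∑ m, e m a * star (e m b) = if a = b then 1 else 0 := by
  have hE : (Matrix.of fun m x => e m x) * (Matrix.of fun m x => e m x)ᴴ = 1 := by
    ext i j
    have h := he j i
    simp only [dotProduct, Pi.star_apply] at h
    simp only [Matrix.mul_apply, Matrix.conjTranspose_apply, Matrix.of_apply, Matrix.one_apply]
    rw [show (∑ x, e i x * star (e j x)) = ∑ x, star (e j x) * e i x from
      Finset.sum_congr rfl fun x _ => mul_comm _ _, h]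
    simp [eq_comm]
  have hE2 := mul_eq_one_comm.mp hE
  intro a b
  have h2 := congrFun (congrFun hE2 a) b
  simp only [Matrix.mul_apply, Matrix.conjTranspose_apply, Matrix.of_apply,
    Matrix.one_apply] at h2
  have h3 : (∑ m, e m a * star (e m b)) = star (∑ m, star (e m a) * e m b) := by
    rw [star_sum]
    exact Finset.sum_congr rfl fun m _ => by rw [star_mul', star_star]
  rw [h3, h2]
  split <;> simp

lemma he'_of_he {N : ℕ} (e : Fin N → (Fin N → ℂ))
    (he : ∀ i j, star (e i) ⬝ᵥ e j = if i = j then 1 else 0) :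
    ∀ m l, ∑ t, e m t * star (e l t) = if m = l then 1 else 0 := by
  intro m l
  have h := he l m
  simp only [dotProduct, Pi.star_apply] at h
  rw [show (∑ t, e m t * star (e l t)) = ∑ t, star (e l t) * e m t from
    Finset.sum_congr rfl fun t _ => mul_comm _ _, h]
  simp [eq_comm]

lemma sgn_sq {ι : Type*} [Fintype ι] [DecidableEq ι] (π : Equiv.Perm ι) :
    ((Equiv.Perm.sign π : ℤ) : ℂ) * ((Equiv.Perm.sign π : ℤ) : ℂ) = 1 := by
  rw [← Int.cast_mul, ← Units.val_mul, Int.units_mul_self]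
  simp

lemma star_antisym_ext {N : ℕ} (e : Fin N → (Fin N → ℂ)) (j : Fin N) (b : Fin N)
    (h : {k : Fin N // k ≠ j} → Fin N) :
    star (antisymVec e fun k => if hk : k = j then b else h ⟨k, hk⟩)
      = ((1 / Real.sqrt (Nat.factorial (Fintype.card (Fin N))) : ℝ) : ℂ) *
        ∑ σ : Equiv.Perm (Fin N), ((Equiv.Perm.sign σ : ℤ) : ℂ) *
          (star (e (σ j) b) * ∏ k : {k : Fin N // k ≠ j}, star (e (σ ↑k) (h k))) := by
  rw [antisym_ext, star_mul']
  congr 1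
  · simp [Complex.conj_ofReal]
  · rw [star_sum]
    apply Finset.sum_congr rfl
    intro σ _
    rw [star_mul', star_mul', star_prod]
    simp [mul_comm]

lemma parta {N : ℕ} (hN : 0 < N) (e : Fin N → (Fin N → ℂ))
    (he : ∀ i j, star (e i) ⬝ᵥ e j = if i = j then 1 else 0) (j : Fin N) :
    reducedParty (antisymVec e) j = ((1 / N : ℝ) : ℂ) • (1 : Matrix (Fin N) (Fin N) ℂ) := by
  have he' := he'_of_he e he
  set c : ℂ := ((1 / Real.sqrt (Nat.factorial (Fintype.card (Fin N))) : ℝ) : ℂ) with hc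
  set P : Equiv.Perm (Fin N) → Fin N → ({k : Fin N // k ≠ j} → Fin N) → ℂ :=
    fun π a h => ((Equiv.Perm.sign π : ℤ) : ℂ) *
      (e (π j) a * ∏ k : {k : Fin N // k ≠ j}, e (π ↑k) (h k)) with hP
  set Q : Equiv.Perm (Fin N) → Fin N → ({k : Fin N // k ≠ j} → Fin N) → ℂ :=
    fun σ b h => ((Equiv.Perm.sign σ : ℤ) : ℂ) *
      (star (e (σ j) b) * ∏ k : {k : Fin N // k ≠ j}, star (e (σ ↑k) (h k))) with hQ
  ext a b
  have hterm : ∀ h : {k : Fin N // k ≠ j} → Fin N,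
      (antisymVec e fun k => if hk : k = j then a else h ⟨k, hk⟩) *
        star (antisymVec e fun k => if hk : k = j then b else h ⟨k, hk⟩)
      = (c * c) * ∑ π : Equiv.Perm (Fin N), ∑ σ : Equiv.Perm (Fin N), P π a h * Q σ b h := by
    intro h
    rw [antisym_ext, star_antisym_ext, mul_mul_mul_comm, Finset.sum_mul_sum]
  have hinner : ∀ (π σ : Equiv.Perm (Fin N)), ∑ h : {k : Fin N // k ≠ j} → Fin N,
      P π a h * Q σ b h
      = (((Equiv.Perm.sign π : ℤ) : ℂ) * ((Equiv.Perm.sign σ : ℤ) : ℂ)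
          * (e (π j) a * star (e (σ j) b))) * (if π = σ then 1 else 0) := by
    intro π σ
    have h1 : ∀ h : {k : Fin N // k ≠ j} → Fin N, P π a h * Q σ b h
        = (((Equiv.Perm.sign π : ℤ) : ℂ) * ((Equiv.Perm.sign σ : ℤ) : ℂ)
            * (e (π j) a * star (e (σ j) b))) *
          ((∏ k : {k : Fin N // k ≠ j}, e (π ↑k) (h k)) *
            (∏ k : {k : Fin N // k ≠ j}, star (e (σ ↑k) (h k)))) := by
      intro h; rw [hP, hQ]; ring
    rw [Finset.sum_congr rfl fun h _ => h1 h, ← Finset.mul_sum,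
      sum_prod_factor (κ := {k : Fin N // k ≠ j}) (fun k => e (π ↑k))
        (fun k t => star (e (σ ↑k) t)),
      prod_delta_perm e j π σ he']
  have hsum : reducedParty (antisymVec e) j a b
      = (c * c) * ∑ π : Equiv.Perm (Fin N), e (π j) a * star (e (π j) b) := by
    rw [reducedParty]
    rw [Finset.sum_congr rfl fun h _ => hterm h, ← Finset.mul_sum]
    congr 1
    rw [Finset.sum_comm]
    rw [Finset.sum_congr rfl fun π (_ : π ∈ Finset.univ) => Finset.sum_comm]
    rw [Finset.sum_congr rfl fun π (_ : π ∈ Finset.univ) =>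
      Finset.sum_congr rfl fun σ _ => hinner π σ]
    apply Finset.sum_congr rfl
    intro π _
    simp only [mul_ite, mul_one, mul_zero, Finset.sum_ite_eq, Finset.mem_univ, if_true]
    rw [sgn_sq, one_mul]
  rw [hsum, sum_perm_eval j (fun m => e m a * star (e m b)), rows_complete e he a b]
  have hN0 : (N : ℂ) ≠ 0 := Nat.cast_ne_zero.mpr hN.ne'
  have hF0 : ((Nat.factorial N : ℕ) : ℂ) ≠ 0 := Nat.cast_ne_zero.mpr (Nat.factorial_ne_zero N)
  have hcc : c * c = 1 / ((Nat.factorial N : ℕ) : ℂ) := by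
    rw [hc, ← Complex.ofReal_mul, Fintype.card_fin, div_mul_div_comm, one_mul,
      Real.mul_self_sqrt (by positivity)]
    push_cast
    ring
  have hNC : (N : ℂ) * (((Finset.univ.filter
      fun π : Equiv.Perm (Fin N) => π j = j).card : ℕ) : ℂ) = ((Nat.factorial N : ℕ) : ℂ) := by
    exact_mod_cast congrArg (Nat.cast : ℕ → ℂ) (card_mul_fiber j)
  have key : c * c * (((Finset.univ.filter
      fun π : Equiv.Perm (Fin N) => π j = j).card : ℕ) : ℂ) = 1 / (N : ℂ) := by
    rw [hcc]
    field_simp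
    linear_combination hNC
  rw [Matrix.smul_apply, Matrix.one_apply, smul_eq_mul, ← mul_assoc, key]
  push_cast
  ring

lemma partb_prob {N : ℕ} (hN : 0 < N) (e : Fin N → (Fin N → ℂ))
    (he : ∀ i j, star (e i) ⬝ᵥ e j = if i = j then 1 else 0)
    (v : Fin N → ℂ) (hv : star v ⬝ᵥ v = 1) (j : Fin N) :
    ∑ h : {k : Fin N // k ≠ j} → Fin N, ‖condVec (antisymVec e) j v h‖ ^ 2 = 1 / N := by
  have he' := he'_of_he e he
  set c : ℂ := ((1 / Real.sqrt (Nat.factorial (Fintype.card (Fin N))) : ℝ) : ℂ) with hc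
  set A : Fin N → ℂ := fun m => ∑ a, star (v a) * e m a with hA
  have hstarA : ∀ m, star (A m) = ∑ a, v a * star (e m a) := by
    intro m
    rw [hA, star_sum]
    exact Finset.sum_congr rfl fun a _ => by rw [star_mul', star_star]
  have hAA : ∑ m, A m * star (A m) = 1 := by
    have h1 : ∀ m, A m * star (A m)
        = ∑ a, ∑ b, (star (v a) * v b) * (e m a * star (e m b)) := by
      intro m
      rw [hA, hstarA, Finset.sum_mul_sum]
      exact Finset.sum_congr rfl fun a _ => Finset.sum_congr rfl fun b _ => by ring
    rw [Finset.sum_congr rfl fun m _ => h1 m, Finset.sum_comm]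
    have h2 : ∀ a, ∑ m, ∑ b, (star (v a) * v b) * (e m a * star (e m b))
        = star (v a) * v a := by
      intro a
      rw [Finset.sum_comm]
      have h3 : ∀ b, ∑ m, (star (v a) * v b) * (e m a * star (e m b))
          = (star (v a) * v b) * (if a = b then 1 else 0) := by
        intro b
        rw [← Finset.mul_sum, rows_complete e he a b]
      rw [Finset.sum_congr rfl fun b _ => h3 b]
      simp only [mul_ite, mul_one, mul_zero, Finset.sum_ite_eq, Finset.mem_univ, if_true]
    rw [Finset.sum_congr rfl fun a _ => h2 a]
    simpa only [dotProduct, Pi.star_apply] using hv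
  set P : Equiv.Perm (Fin N) → ({k : Fin N // k ≠ j} → Fin N) → ℂ :=
    fun π h => ((Equiv.Perm.sign π : ℤ) : ℂ) *
      (A (π j) * ∏ k : {k : Fin N // k ≠ j}, e (π ↑k) (h k)) with hP
  set Q : Equiv.Perm (Fin N) → ({k : Fin N // k ≠ j} → Fin N) → ℂ :=
    fun σ h => ((Equiv.Perm.sign σ : ℤ) : ℂ) *
      (star (A (σ j)) * ∏ k : {k : Fin N // k ≠ j}, star (e (σ ↑k) (h k))) with hQ
  have hcond : ∀ h, condVec (antisymVec e) j v h = c * ∑ π : Equiv.Perm (Fin N), P π h :=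
    fun h => condVec_antisym e j v h
  have hstarcond : ∀ h, star (condVec (antisymVec e) j v h)
      = c * ∑ σ : Equiv.Perm (Fin N), Q σ h := by
    intro h
    rw [hcond h, star_mul']
    congr 1
    · simp [hc, Complex.conj_ofReal]
    · rw [star_sum]
      apply Finset.sum_congr rfl
      intro σ _
      rw [hP, hQ]
      simp only
      rw [star_mul', star_mul', star_prod]
      simp [mul_comm]
  have hinner : ∀ (π σ : Equiv.Perm (Fin N)), ∑ h : {k : Fin N // k ≠ j} → Fin N, P π h * Q σ h
      = (((Equiv.Perm.sign π : ℤ) : ℂ) * ((Equiv.Perm.sign σ : ℤ) : ℂ)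
          * (A (π j) * star (A (σ j)))) * (if π = σ then 1 else 0) := by
    intro π σ
    have h1 : ∀ h : {k : Fin N // k ≠ j} → Fin N, P π h * Q σ h
        = (((Equiv.Perm.sign π : ℤ) : ℂ) * ((Equiv.Perm.sign σ : ℤ) : ℂ)
            * (A (π j) * star (A (σ j)))) *
          ((∏ k : {k : Fin N // k ≠ j}, e (π ↑k) (h k)) *
            (∏ k : {k : Fin N // k ≠ j}, star (e (σ ↑k) (h k)))) := by
      intro h; rw [hP, hQ]; ring
    rw [Finset.sum_congr rfl fun h _ => h1 h, ← Finset.mul_sum,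
      sum_prod_factor (κ := {k : Fin N // k ≠ j}) (fun k => e (π ↑k))
        (fun k t => star (e (σ ↑k) t)),
      prod_delta_perm e j π σ he']
  have hsum : ∑ h : {k : Fin N // k ≠ j} → Fin N,
      condVec (antisymVec e) j v h * star (condVec (antisymVec e) j v h) = 1 / (N : ℂ) := by
    have hterm : ∀ h : {k : Fin N // k ≠ j} → Fin N,
        condVec (antisymVec e) j v h * star (condVec (antisymVec e) j v h)
        = (c * c) * ∑ π : Equiv.Perm (Fin N), ∑ σ : Equiv.Perm (Fin N), P π h * Q σ h := by
      intro h
      rw [hstarcond h, hcond h, mul_mul_mul_comm, Finset.sum_mul_sum]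
    rw [Finset.sum_congr rfl fun h _ => hterm h, ← Finset.mul_sum, Finset.sum_comm]
    rw [Finset.sum_congr rfl fun π (_ : π ∈ Finset.univ) => Finset.sum_comm]
    rw [Finset.sum_congr rfl fun π (_ : π ∈ Finset.univ) =>
      Finset.sum_congr rfl fun σ _ => hinner π σ]
    have hcollapse : ∀ π : Equiv.Perm (Fin N), (∑ σ : Equiv.Perm (Fin N),
        (((Equiv.Perm.sign π : ℤ) : ℂ) * ((Equiv.Perm.sign σ : ℤ) : ℂ)
          * (A (π j) * star (A (σ j)))) * (if π = σ then 1 else 0))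
        = A (π j) * star (A (π j)) := by
      intro π
      simp only [mul_ite, mul_one, mul_zero, Finset.sum_ite_eq, Finset.mem_univ, if_true]
      rw [sgn_sq, one_mul]
    rw [Finset.sum_congr rfl fun π _ => hcollapse π,
      sum_perm_eval j (fun m => A m * star (A m)), hAA, mul_one]
    have hN0 : (N : ℂ) ≠ 0 := Nat.cast_ne_zero.mpr hN.ne'
    have hcc : c * c = 1 / ((Nat.factorial N : ℕ) : ℂ) := by
      rw [hc, ← Complex.ofReal_mul, Fintype.card_fin, div_mul_div_comm, one_mul,
        Real.mul_self_sqrt (by positivity)]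
      push_cast
      ring
    have hNC : (N : ℂ) * (((Finset.univ.filter
        fun π : Equiv.Perm (Fin N) => π j = j).card : ℕ) : ℂ) = ((Nat.factorial N : ℕ) : ℂ) := by
      exact_mod_cast congrArg (Nat.cast : ℕ → ℂ) (card_mul_fiber j)
    have hF0 : ((Nat.factorial N : ℕ) : ℂ) ≠ 0 := Nat.cast_ne_zero.mpr (Nat.factorial_ne_zero N)
    rw [hcc]
    field_simp
    linear_combination hNC
  have hre : ∀ h : {k : Fin N // k ≠ j} → Fin N,
      ((‖condVec (antisymVec e) j v h‖ ^ 2 : ℝ) : ℂ)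
        = condVec (antisymVec e) j v h * star (condVec (antisymVec e) j v h) := by
    intro h
    rw [show (star (condVec (antisymVec e) j v h))
        = (starRingEnd ℂ) (condVec (antisymVec e) j v h) from rfl, Complex.mul_conj]
    norm_cast
    rw [Complex.normSq_eq_norm_sq]
  apply Complex.ofReal_injective
  rw [Complex.ofReal_sum]
  rw [Finset.sum_congr rfl fun h _ => hre h, hsum]
  push_cast
  ring

lemma partb_cond {N : ℕ} (hN : 0 < N) (j : Fin N) (e : Fin N → (Fin N → ℂ))
    (he : ∀ i j, star (e i) ⬝ᵥ e j = if i = j then 1 else 0)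
    (v : Fin N → ℂ) (hv : star v ⬝ᵥ v = 1)
    (g : {k : Fin N // k ≠ j} → (Fin N → ℂ))
    (hg : ∀ k l, star (g k) ⬝ᵥ g l = if k = l then 1 else 0)
    (hvg : ∀ k, star v ⬝ᵥ g k = 0) :
    ∃ c : ℂ, ‖c‖ = 1 ∧ ∀ h, ((Real.sqrt N : ℝ) : ℂ) * condVec (antisymVec e) j v h
      = c * antisymVec g h := by
  classical
  set b : Fin N → (Fin N → ℂ) := fun m => if hm : m = j then v else g ⟨m, hm⟩ with hbdef
  have hbj : b j = v := dif_pos rfl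
  have hbk : ∀ (m : Fin N) (hm : m ≠ j), b m = g ⟨m, hm⟩ := fun m hm => dif_neg hm
  have hgv : ∀ k, star (g k) ⬝ᵥ v = 0 := by
    intro k
    have h1 := congrArg star (hvg k)
    rw [star_zero] at h1
    rw [← h1]
    simp only [dotProduct, Pi.star_apply, star_sum, star_mul', star_star]
    exact Finset.sum_congr rfl fun a _ => mul_comm _ _
  have hb : ∀ i j', star (b i) ⬝ᵥ b j' = if i = j' then 1 else 0 := by
    intro i j'
    by_cases hi : i = j <;> by_cases hj' : j' = j
    · subst hi; subst hj'; rw [hbj, hv, if_pos rfl]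
    · subst hi
      rw [hbj, hbk j' hj', hvg ⟨j', hj'⟩, if_neg (fun hc => hj' hc.symm)]
    · subst hj'
      rw [hbj, hbk i hi, hgv ⟨i, hi⟩, if_neg hi]
    · rw [hbk i hi, hbk j' hj', hg ⟨i, hi⟩ ⟨j', hj'⟩]
      by_cases hij : i = j' <;> simp [hij, Subtype.ext_iff]
  obtain ⟨u, hu, hbase⟩ := antisym_basis_change e b he hb
  refine ⟨u, hu, fun h => ?_⟩
  have h1 : condVec (antisymVec e) j v h = u * condVec (antisymVec b) j v h := by
    have h0 : antisymVec e = fun h' => u * antisymVec b h' := funext hbase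
    rw [h0]
    exact condVec_smul (antisymVec b) u j v h
  have h2 : condVec (antisymVec b) j v h
      = ((1 / Real.sqrt (Nat.factorial (Fintype.card (Fin N))) : ℝ) : ℂ) *
        ∑ τ : Equiv.Perm {k : Fin N // k ≠ j}, ((Equiv.Perm.sign τ : ℤ) : ℂ) *
          ∏ k, g (τ k) (h k) := by
    rw [condVec_antisym]
    congr 1
    have hip : ∀ π : Equiv.Perm (Fin N),
        (∑ a, star (v a) * b (π j) a) = if π j = j then 1 else 0 := by
      intro π
      by_cases hπ : π j = j
      · rw [if_pos hπ, hπ, hbj]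
        simpa [dotProduct] using hv
      · rw [if_neg hπ, hbk (π j) hπ]
        simpa [dotProduct] using hvg ⟨π j, hπ⟩
    rw [Finset.sum_congr rfl fun π _ => by rw [hip π]]
    rw [sum_perm_restrict j (fun m k => b m (h k))]
    apply Finset.sum_congr rfl
    intro τ _
    congr 1
    apply Finset.prod_congr rfl
    intro k _
    rw [hbk ↑(τ k) (τ k).2, Subtype.coe_eta]
  rw [h1, h2, antisymVec]
  have hfacpos : (0:ℝ) < Real.sqrt (Nat.factorial (N-1)) :=
    Real.sqrt_pos.mpr (by positivity)
  have hNpos : (0:ℝ) < Real.sqrt N := Real.sqrt_pos.mpr (by exact_mod_cast hN)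
  have hconst : ((Real.sqrt N : ℝ) : ℂ) *
      ((1 / Real.sqrt (Nat.factorial (Fintype.card (Fin N))) : ℝ) : ℂ)
      = ((1 / Real.sqrt (Nat.factorial (Fintype.card {k : Fin N // k ≠ j})) : ℝ) : ℂ) := by
    rw [← Complex.ofReal_mul]
    congr 1
    rw [Fintype.card_fin, card_ne j]
    have hfac : Nat.factorial N = N * Nat.factorial (N - 1) := by
      conv_lhs => rw [← Nat.succ_pred_eq_of_pos hN]
      rw [Nat.factorial_succ, show N.pred + 1 = N from Nat.succ_pred_eq_of_pos hN,
        Nat.pred_eq_sub_one]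
    rw [hfac]
    push_cast
    rw [Real.sqrt_mul (by positivity)]
    field_simp
  rw [← hconst]
  ring

/-- For the Aharonov (totally antisymmetric) state
`|ψ_NA⟩ = (1/√N!) ∑_π sgn(π) |e_{π(1)}⟩⊗…⊗|e_{π(N)}⟩` built from an orthonormal basis `e` of ℂ^N:
(a) the reduced density matrix of each party is the maximally mixed state `(1/N) I`;
(b) measuring the first party in any orthonormal basis `f` gives each outcome `f i` with
probability `1/N`, and the conditional (normalized) state of the remaining `N−1` parties is,
up to a phase, the normalized totally antisymmetric state built from any orthonormal family `g`
orthogonal to `f i` (i.e. any orthonormal basis of the orthogonal complement of `f i`). -/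
theorem aharonov_reduced_and_conditional
    {N : ℕ} (hN : 0 < N)
    (e : Fin N → (Fin N → ℂ))
    (he : ∀ i j, star (e i) ⬝ᵥ e j = if i = j then 1 else 0) :
    (∀ j : Fin N, reducedParty (antisymVec e) j =
        ((1 / N : ℝ) : ℂ) • (1 : Matrix (Fin N) (Fin N) ℂ)) ∧
    (∀ (f : Fin N → (Fin N → ℂ)),
      (∀ i j, star (f i) ⬝ᵥ f j = if i = j then 1 else 0) →
      ∀ i : Fin N,
        (∑ h, ‖condVec (antisymVec e) (⟨0, hN⟩ : Fin N) (f i) h‖ ^ 2 = 1 / N) ∧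
        (∀ g : {k : Fin N // k ≠ (⟨0, hN⟩ : Fin N)} → (Fin N → ℂ),
          (∀ k l, star (g k) ⬝ᵥ g l = if k = l then 1 else 0) →
          (∀ k, star (f i) ⬝ᵥ g k = 0) →
          ∃ c : ℂ, ‖c‖ = 1 ∧ ∀ h,
            ((Real.sqrt N : ℝ) : ℂ) * condVec (antisymVec e) (⟨0, hN⟩ : Fin N) (f i) h
              = c * antisymVec g h)) := by
  constructor
  · intro j
    exact parta hN e he j
  · intro f hf i
    have hv : star (f i) ⬝ᵥ f i = 1 := by simpa using hf i i
    constructor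
    · exact partb_prob hN e he (f i) hv ⟨0, hN⟩
    · intro g hg hfg
      exact partb_cond hN ⟨0, hN⟩ e he (f i) hv g hg hfg
end

section
/- Every orthonormal basis of ℂ² ⊗ ℂ² consisting of product vectors is one-way implementable: if {v₁, v₂, v₃, v₄} is an orthonormal basis of ℂ² ⊗ ℂ² with each v_k = a_k ⊗ b_k a product vector, then, possibly after exchanging the two tensor factors, there exist an orthonormal basis {f₁, f₂} of the first factor ℂ² and orthonormal bases {g₁^{(1)}, g₂^{(1)}} and {g₁^{(2)}, g₂^{(2)}} of the second factor such that the basis is, up to phases, {f₁ ⊗ g₁^{(1)}, f₁ ⊗ g₂^{(1)}, f₂ ⊗ g₁^{(2)}, f₂ ⊗ g₂^{(2)}}. -/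
open Matrix

lemma dp_expand (x y : Fin 2 → ℂ) :
    star x ⬝ᵥ y = (starRingEnd ℂ) (x 0) * y 0 + (starRingEnd ℂ) (x 1) * y 1 := by
  simp [dotProduct, Fin.sum_univ_two, Complex.star_def]

lemma dp_tensor (v w : Fin 2 × Fin 2 → ℂ) (a b a' b' : Fin 2 → ℂ)
    (hv : ∀ p, v p = a p.1 * b p.2) (hw : ∀ p, w p = a' p.1 * b' p.2) :
    star v ⬝ᵥ w = (star a ⬝ᵥ a') * (star b ⬝ᵥ b') := by
  simp only [dotProduct, Pi.star_apply, hv, hw, Fintype.sum_prod_type, Fin.sum_univ_two,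
    star_mul']
  ring

lemma dp_conj (x y : Fin 2 → ℂ) : star y ⬝ᵥ x = (starRingEnd ℂ) (star x ⬝ᵥ y) := by
  simp only [dp_expand, RingHom.map_add, RingHom.map_mul, Complex.conj_conj]
  ring

lemma dp_zero_symm {x y : Fin 2 → ℂ} (h : star x ⬝ᵥ y = 0) : star y ⬝ᵥ x = 0 := by
  rw [dp_conj, h, map_zero]

lemma dp_smul_left (μ : ℂ) (x y : Fin 2 → ℂ) :
    star (μ • x) ⬝ᵥ y = (starRingEnd ℂ) μ * (star x ⬝ᵥ y) := by
  simp only [dp_expand, Pi.smul_apply, smul_eq_mul, RingHom.map_mul]; ring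

lemma dp_smul_right (μ : ℂ) (x y : Fin 2 → ℂ) :
    star x ⬝ᵥ (μ • y) = μ * (star x ⬝ᵥ y) := by
  simp only [dp_expand, Pi.smul_apply, smul_eq_mul]; ring

lemma dp_self_real (x : Fin 2 → ℂ) :
    star x ⬝ᵥ x = ((Complex.normSq (x 0) + Complex.normSq (x 1) : ℝ) : ℂ) := by
  simp only [dotProduct, Fin.sum_univ_two, Pi.star_apply, Complex.star_def,
    mul_comm ((starRingEnd ℂ) _), Complex.mul_conj]
  push_cast
  ring

lemma conj_ne_zero {μ : ℂ} (h : μ ≠ 0) : (starRingEnd ℂ) μ ≠ 0 := by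
  simpa using h

/-- In ℂ², two vectors orthogonal to the same nonzero vector are parallel. -/
lemma perp_perp (x y z : Fin 2 → ℂ) (hx : star x ⬝ᵥ x ≠ 0) (hy : star y ⬝ᵥ y ≠ 0)
    (hxy : star x ⬝ᵥ y = 0) (hxz : star x ⬝ᵥ z = 0) : ∃ μ : ℂ, z = μ • y := by
  rw [dp_expand] at hxy hxz
  set c0 := (starRingEnd ℂ) (x 0) with hc0def
  set c1 := (starRingEnd ℂ) (x 1) with hc1def
  have hx' : c0 ≠ 0 ∨ c1 ≠ 0 := by
    by_contra h
    push_neg at h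
    apply hx
    rw [dp_expand, ← hc0def, ← hc1def, h.1, h.2]
    ring
  have hy' : y 0 ≠ 0 ∨ y 1 ≠ 0 := by
    by_contra h
    push_neg at h
    apply hy
    rw [dp_expand, h.1, h.2]
    ring
  by_cases h0 : y 0 = 0
  · have h1 : y 1 ≠ 0 := by
      rcases hy' with h | h
      · exact absurd h0 h
      · exact h
    have hc1 : c1 = 0 := by
      rw [h0, mul_zero, zero_add] at hxy
      exact (mul_eq_zero.mp hxy).resolve_right h1
    have hc0 : c0 ≠ 0 := by
      rcases hx' with h | h
      · exact h
      · exact absurd hc1 h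
    have hz0 : z 0 = 0 := by
      rw [hc1, zero_mul, add_zero] at hxz
      exact (mul_eq_zero.mp hxz).resolve_left hc0
    refine ⟨z 1 / y 1, funext fun i => ?_⟩
    fin_cases i <;> simp [hz0, h0]
    field_simp
  · have key : z 1 * y 0 = z 0 * y 1 := by
      have hkey : z 1 * y 0 - z 0 * y 1 = 0 := by
        rcases hx' with hc | hc
        · have : c0 * (z 1 * y 0 - z 0 * y 1) = 0 := by
            linear_combination z 1 * hxy - y 1 * hxz
          exact (mul_eq_zero.mp this).resolve_left hc
        · have : c1 * (z 1 * y 0 - z 0 * y 1) = 0 := by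
            linear_combination y 0 * hxz - z 0 * hxy
          exact (mul_eq_zero.mp this).resolve_left hc
      linear_combination hkey
    refine ⟨z 0 / y 0, funext fun i => ?_⟩
    fin_cases i <;> simp
    · field_simp
    · field_simp
      first
      | linear_combination key
      | linear_combination -key
      | linear_combination 2 * key
      | linear_combination -2 * key

lemma smul_ne_zero_dp {x y : Fin 2 → ℂ} {μ : ℂ} (h : y = μ • x) (hy : star y ⬝ᵥ y ≠ 0) :
    μ ≠ 0 ∧ star x ⬝ᵥ x ≠ 0 := by
  rw [h, dp_smul_left, dp_smul_right] at hy
  constructor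
  · rintro rfl; simp at hy
  · intro hx; rw [hx] at hy; simp at hy

lemma par_symm {x y : Fin 2 → ℂ} {μ : ℂ} (h : y = μ • x) (hy : star y ⬝ᵥ y ≠ 0) :
    ∃ ν : ℂ, x = ν • y := by
  obtain ⟨hμ, -⟩ := smul_ne_zero_dp h hy
  exact ⟨μ⁻¹, by rw [h, smul_smul, inv_mul_cancel₀ hμ, one_smul]⟩

lemma not_orth_of_par {x y : Fin 2 → ℂ} {μ : ℂ} (h : y = μ • x) (hy : star y ⬝ᵥ y ≠ 0) :
    star x ⬝ᵥ y ≠ 0 := by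
  obtain ⟨hμ, hx⟩ := smul_ne_zero_dp h hy
  rw [h, dp_smul_right]
  exact mul_ne_zero hμ hx

/-- The family pairs up: there is a grouping into two pairs, parallel within groups,
orthogonal across groups. -/
def OWGood (a : Fin 4 → Fin 2 → ℂ) : Prop :=
  ∃ e : Fin 4 ≃ Fin 2 × Fin 2,
    (∀ k l, (e k).1 = (e l).1 → ∃ μ : ℂ, a l = μ • a k) ∧
    (∀ k l, (e k).1 ≠ (e l).1 → star (a k) ⬝ᵥ a l = 0)

lemma owgood_comp (a : Fin 4 → Fin 2 → ℂ) (π : Equiv.Perm (Fin 4))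
    (h : OWGood (a ∘ π)) : OWGood a := by
  obtain ⟨e, h1, h2⟩ := h
  refine ⟨π.symm.trans e, fun k l hkl => ?_, fun k l hkl => ?_⟩
  · have := h1 (π.symm k) (π.symm l) hkl
    simpa using this
  · have := h2 (π.symm k) (π.symm l) hkl
    simpa using this

def e01 : Fin 4 ≃ Fin 2 × Fin 2 :=
  ⟨![(0,0),(0,1),(1,0),(1,1)], fun p => ![![0,1],![2,3]] p.1 p.2, by decide, by decide⟩

def e02 : Fin 4 ≃ Fin 2 × Fin 2 :=
  ⟨![(0,0),(1,0),(0,1),(1,1)], fun p => ![![0,2],![1,3]] p.1 p.2, by decide, by decide⟩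

section Combinatorics

variable (a b : Fin 4 → Fin 2 → ℂ)
    (ha : ∀ k, star (a k) ⬝ᵥ a k ≠ 0) (hb : ∀ k, star (b k) ⬝ᵥ b k ≠ 0)
    (hor : ∀ k l, k ≠ l → star (a k) ⬝ᵥ a l = 0 ∨ star (b k) ⬝ᵥ b l = 0)

include ha hb hor

lemma vertex (hb01 : star (b 0) ⬝ᵥ b 1 = 0) (m : Fin 4) (hm0 : m ≠ 0) (hm1 : m ≠ 1) :
    star (a 0) ⬝ᵥ a m = 0 ∨ star (a 1) ⬝ᵥ a m = 0 := by
  by_contra h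
  push_neg at h
  have hb0m := (hor 0 m (Ne.symm hm0)).resolve_left h.1
  have hb1m := (hor 1 m (Ne.symm hm1)).resolve_left h.2
  obtain ⟨μ, hμ⟩ := perp_perp (b 0) (b 1) (b m) (hb 0) (hb 1) hb01 hb0m
  exact not_orth_of_par hμ (hb m) hb1m

lemma case1core (hb01 : star (b 0) ⬝ᵥ b 1 = 0)
    (ha02 : star (a 0) ⬝ᵥ a 2 = 0) (ha12 : star (a 1) ⬝ᵥ a 2 = 0) : OWGood a := by
  obtain ⟨μ, hμ⟩ := perp_perp (a 2) (a 0) (a 1) (ha 2) (ha 0)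
    (dp_zero_symm ha02) (dp_zero_symm ha12)
  have hμ0 : μ ≠ 0 := (smul_ne_zero_dp hμ (ha 1)).1
  have ha03 : star (a 0) ⬝ᵥ a 3 = 0 := by
    rcases vertex a b ha hb hor hb01 3 (by decide) (by decide) with h | h
    · exact h
    · rw [hμ, dp_smul_left] at h
      exact (mul_eq_zero.mp h).resolve_left (conj_ne_zero hμ0)
  have ha13 : star (a 1) ⬝ᵥ a 3 = 0 := by
    rw [hμ, dp_smul_left, ha03, mul_zero]
  obtain ⟨ν, hν⟩ := perp_perp (a 0) (a 2) (a 3) (ha 0) (ha 2) ha02 ha03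
  refine ⟨e01, fun k l => ?_, fun k l => ?_⟩ <;> fin_cases k <;> fin_cases l <;> intro h
  all_goals first
  | exact absurd h (by decide)
  | exact absurd (by decide) h
  | exact ⟨1, (one_smul ℂ _).symm⟩
  | exact ⟨μ, hμ⟩
  | exact par_symm hμ (ha 1)
  | exact ⟨ν, hν⟩
  | exact par_symm hν (ha 3)
  | exact ha02
  | exact ha03
  | exact ha12
  | exact ha13
  | exact dp_zero_symm ha02
  | exact dp_zero_symm ha03
  | exact dp_zero_symm ha12
  | exact dp_zero_symm ha13

lemma case2core (hb01 : star (b 0) ⬝ᵥ b 1 = 0)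
    (ha02 : star (a 0) ⬝ᵥ a 2 = 0) (hna12 : star (a 1) ⬝ᵥ a 2 ≠ 0) : OWGood b := by
  have hb12 : star (b 1) ⬝ᵥ b 2 = 0 := (hor 1 2 (by decide)).resolve_left hna12
  obtain ⟨β, hβ⟩ : ∃ β : ℂ, b 2 = β • b 0 :=
    perp_perp (b 1) (b 0) (b 2) (hb 1) (hb 0) (dp_zero_symm hb01) hb12
  have hβ0 : β ≠ 0 := (smul_ne_zero_dp hβ (hb 2)).1
  by_cases h03 : star (a 0) ⬝ᵥ a 3 = 0
  · exfalso
    obtain ⟨ρ, hρ⟩ := perp_perp (a 0) (a 2) (a 3) (ha 0) (ha 2) ha02 h03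
    have hna23 : star (a 2) ⬝ᵥ a 3 ≠ 0 := not_orth_of_par hρ (ha 3)
    have hb23 : star (b 2) ⬝ᵥ b 3 = 0 := (hor 2 3 (by decide)).resolve_left hna23
    by_cases h13 : star (a 1) ⬝ᵥ a 3 = 0
    · obtain ⟨μ, hμ⟩ := perp_perp (a 3) (a 0) (a 1) (ha 3) (ha 0)
        (dp_zero_symm h03) (dp_zero_symm h13)
      apply hna12
      rw [hμ, dp_smul_left, ha02, mul_zero]
    · have hb13 : star (b 1) ⬝ᵥ b 3 = 0 := (hor 1 3 (by decide)).resolve_left h13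
      obtain ⟨δ, hδ⟩ := perp_perp (b 1) (b 0) (b 3) (hb 1) (hb 0) (dp_zero_symm hb01) hb13
      have hδ0 : δ ≠ 0 := (smul_ne_zero_dp hδ (hb 3)).1
      rw [hβ, hδ, dp_smul_left, dp_smul_right] at hb23
      exact mul_ne_zero (conj_ne_zero hβ0) (mul_ne_zero hδ0 (hb 0)) hb23
  · have h13 : star (a 1) ⬝ᵥ a 3 = 0 :=
      (vertex a b ha hb hor hb01 3 (by decide) (by decide)).resolve_left h03
    have hb03 : star (b 0) ⬝ᵥ b 3 = 0 := (hor 0 3 (by decide)).resolve_left h03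
    obtain ⟨γ, hγ⟩ : ∃ γ : ℂ, b 3 = γ • b 1 :=
      perp_perp (b 0) (b 1) (b 3) (hb 0) (hb 1) hb01 hb03
    have hb21 : star (b 2) ⬝ᵥ b 1 = 0 := by
      rw [hβ, dp_smul_left, hb01, mul_zero]
    have hb23 : star (b 2) ⬝ᵥ b 3 = 0 := by
      rw [hβ, dp_smul_left, hb03, mul_zero]
    refine ⟨e02, fun k l => ?_, fun k l => ?_⟩ <;> fin_cases k <;> fin_cases l <;> intro h
    all_goals first
    | exact absurd h (by decide)
    | exact absurd (by decide) h
    | exact ⟨1, (one_smul ℂ _).symm⟩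
    | exact ⟨β, hβ⟩
    | exact par_symm hβ (hb 2)
    | exact ⟨γ, hγ⟩
    | exact par_symm hγ (hb 3)
    | exact hb01
    | exact hb03
    | exact hb21
    | exact hb23
    | exact dp_zero_symm hb01
    | exact dp_zero_symm hb03
    | exact dp_zero_symm hb21
    | exact dp_zero_symm hb23

lemma step (hb01 : star (b 0) ⬝ᵥ b 1 = 0) : OWGood a ∨ OWGood b := by
  by_cases h12 : star (a 1) ⬝ᵥ a 2 = 0
  · by_cases h02 : star (a 0) ⬝ᵥ a 2 = 0
    · exact Or.inl (case1core a b ha hb hor hb01 h02 h12)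
    · -- swap indices 0 and 1
      right
      apply owgood_comp b (Equiv.swap 0 1)
      set π : Equiv.Perm (Fin 4) := Equiv.swap 0 1 with hπ
      have hπ0 : π 0 = 1 := Equiv.swap_apply_left 0 1
      have hπ1 : π 1 = 0 := Equiv.swap_apply_right 0 1
      have hπ2 : π 2 = 2 := Equiv.swap_apply_of_ne_of_ne (by decide) (by decide)
      apply case2core (a ∘ π) (b ∘ π) (fun k => ha (π k)) (fun k => hb (π k))
        (fun k l hkl => hor (π k) (π l) (fun hc => hkl (π.injective hc)))
      · show star (b (π 0)) ⬝ᵥ b (π 1) = 0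
        rw [hπ0, hπ1]
        exact dp_zero_symm hb01
      · show star (a (π 0)) ⬝ᵥ a (π 2) = 0
        rw [hπ0, hπ2]
        exact h12
      · show star (a (π 1)) ⬝ᵥ a (π 2) ≠ 0
        rw [hπ1, hπ2]
        exact h02
  · have h02 : star (a 0) ⬝ᵥ a 2 = 0 :=
      (vertex a b ha hb hor hb01 2 (by decide) (by decide)).resolve_right h12
    exact Or.inr (case2core a b ha hb hor hb01 h02 h12)

lemma pairUp : OWGood a ∨ OWGood b := by
  rcases hor 0 1 (by decide) with h | h
  · rcases step b a hb ha (fun k l hkl => (hor k l hkl).symm) h with h' | h'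
    · exact Or.inr h'
    · exact Or.inl h'
  · exact step a b ha hb hor h

end Combinatorics

lemma construct (v : Fin 4 → (Fin 2 × Fin 2 → ℂ)) (a b : Fin 4 → Fin 2 → ℂ)
    (hv : ∀ k l, star (v k) ⬝ᵥ v l = if k = l then 1 else 0)
    (hrep : ∀ k p, v k p = a k p.1 * b k p.2)
    (e : Fin 4 ≃ Fin 2 × Fin 2)
    (hpar : ∀ k l, (e k).1 = (e l).1 → ∃ μ : ℂ, a l = μ • a k)
    (horth : ∀ k l, (e k).1 ≠ (e l).1 → star (a k) ⬝ᵥ a l = 0) :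
    ∃ (f : Fin 2 → (Fin 2 → ℂ)) (g : Fin 2 → Fin 2 → (Fin 2 → ℂ))
        (σ : Fin 4 ≃ Fin 2 × Fin 2) (c : Fin 4 → ℂ),
      (∀ i j, star (f i) ⬝ᵥ f j = if i = j then 1 else 0) ∧
      (∀ i j l, star (g i j) ⬝ᵥ g i l = if j = l then 1 else 0) ∧
      (∀ k, ‖c k‖ = 1) ∧
      (∀ k p, v k p = c k * (f (σ k).1 p.1 * g (σ k).1 (σ k).2 p.2)) := by
  have hprod1 : ∀ k, (star (a k) ⬝ᵥ a k) * (star (b k) ⬝ᵥ b k) = 1 := by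
    intro k
    rw [← dp_tensor (v k) (v k) _ _ _ _ (hrep k) (hrep k), hv k k, if_pos rfl]
  have haself : ∀ k, star (a k) ⬝ᵥ a k ≠ 0 := fun k => left_ne_zero_of_mul_eq_one (hprod1 k)
  have hbself : ∀ k, star (b k) ⬝ᵥ b k ≠ 0 := fun k => right_ne_zero_of_mul_eq_one (hprod1 k)
  -- norms
  set nsq : Fin 4 → ℝ := fun k => Complex.normSq (a k 0) + Complex.normSq (a k 1) with hnsq
  have htt : ∀ k, star (a k) ⬝ᵥ a k = ((nsq k : ℝ) : ℂ) := fun k => dp_self_real (a k)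
  have htpos : ∀ k, 0 < nsq k := by
    intro k
    have h0 : (0:ℝ) ≤ nsq k := add_nonneg (Complex.normSq_nonneg _) (Complex.normSq_nonneg _)
    rcases h0.lt_or_eq with h | h
    · exact h
    · exact absurd (by rw [htt k, ← h]; norm_num) (haself k)
  set s : Fin 4 → ℝ := fun k => Real.sqrt (nsq k) with hs
  have hsC : ∀ k, star (a k) ⬝ᵥ a k = ((s k : ℝ) : ℂ) ^ 2 := by
    intro k
    rw [htt k]
    norm_cast
    rw [hs]
    exact (Real.sq_sqrt (le_of_lt (htpos k))).symm
  have hsne : ∀ k, ((s k : ℝ) : ℂ) ≠ 0 := by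
    intro k
    simp only [ne_eq, Complex.ofReal_eq_zero]
    exact ne_of_gt (Real.sqrt_pos.mpr (htpos k))
  -- representatives
  set r : Fin 2 → Fin 4 := fun i => e.symm (i, 0) with hr
  have hre : ∀ i, (e (r i)).1 = i := fun i => by simp [hr]
  choose μ hμ using fun k => hpar (r (e k).1) k ((hre (e k).1).symm ▸ rfl)
  have hμne : ∀ k, μ k ≠ 0 := fun k => (smul_ne_zero_dp (hμ k) (haself k)).1
  have hμi : ∀ (i : Fin 2) (j : Fin 2),
      a (e.symm (i, j)) = μ (e.symm (i, j)) • a (r i) := by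
    intro i j
    have := hμ (e.symm (i, j))
    rwa [show (e (e.symm (i, j))).1 = i from by simp] at this
  refine ⟨fun i => ((s (r i) : ℝ) : ℂ)⁻¹ • a (r i),
      fun i j => (μ (e.symm (i, j)) * ((s (r i) : ℝ) : ℂ)) • b (e.symm (i, j)),
      e, fun _ => 1, ?_, ?_, fun k => by simp, ?_⟩
  · intro i j
    rw [dp_smul_left, dp_smul_right, map_inv₀, Complex.conj_ofReal]
    by_cases hij : i = j
    · subst hij
      rw [if_pos rfl, hsC (r i)]
      field_simp
      rw [div_self (hsne (r i))]
    · rw [if_neg hij, horth (r i) (r j) (by rw [hre, hre]; exact hij), mul_zero, mul_zero]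
  · intro i j l
    rw [dp_smul_left, dp_smul_right, RingHom.map_mul, Complex.conj_ofReal]
    by_cases hjl : j = l
    · subst hjl
      rw [if_pos rfl]
      have key : star (a (e.symm (i, j))) ⬝ᵥ a (e.symm (i, j)) =
          (starRingEnd ℂ) (μ (e.symm (i, j))) * (μ (e.symm (i, j)) * ((s (r i) : ℝ) : ℂ) ^ 2) := by
        rw [hμi i j, dp_smul_left, dp_smul_right]
        congr 1
        congr 1
        exact hsC (r i)
      have h1 := hprod1 (e.symm (i, j))
      rw [key] at h1
      linear_combination h1
    · rw [if_neg hjl]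
      have hkne : e.symm (i, j) ≠ e.symm (i, l) := by
        intro hc
        exact hjl (congrArg Prod.snd (e.symm.injective hc))
      have hva : (star (a (e.symm (i, j))) ⬝ᵥ a (e.symm (i, l))) *
          (star (b (e.symm (i, j))) ⬝ᵥ b (e.symm (i, l))) = 0 := by
        rw [← dp_tensor _ _ _ _ _ _ (hrep (e.symm (i, j))) (hrep (e.symm (i, l))),
          hv _ _, if_neg hkne]
      have hane : star (a (e.symm (i, j))) ⬝ᵥ a (e.symm (i, l)) ≠ 0 := by
        rw [hμi i j, hμi i l, dp_smul_left, dp_smul_right]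
        exact mul_ne_zero (conj_ne_zero (hμne _)) (mul_ne_zero (hμne _) (haself (r i)))
      rw [(mul_eq_zero.mp hva).resolve_left hane, mul_zero, mul_zero]
  · intro k p
    have hk : e.symm ((e k).1, (e k).2) = k := by
      rw [Prod.mk.eta, e.symm_apply_apply]
    simp only [hk, Pi.smul_apply, smul_eq_mul, one_mul]
    rw [hrep k p, show a k p.1 = μ k * a (r (e k).1) p.1 from by rw [hμ k]; simp]
    linear_combination (-(μ k * a (r (e k).1) p.1 * b k p.2)) *
      mul_inv_cancel₀ (hsne (r (e k).1))

/-- Every orthonormal basis of ℂ² ⊗ ℂ² consisting of product vectors is one-way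
implementable: possibly after exchanging the two factors, there are an orthonormal basis
`{f₁,f₂}` of the first factor and orthonormal bases `{g₁^{(i)},g₂^{(i)}}` of the second factor
such that, up to phases, the basis is `{f_i ⊗ g_j^{(i)}}`. -/
theorem product_basis_two_qubits_one_way_implementable
    (v : Fin 4 → (Fin 2 × Fin 2 → ℂ))
    (hv : ∀ k l, star (v k) ⬝ᵥ v l = if k = l then 1 else 0)
    (hprod : ∀ k, ∃ (a b : Fin 2 → ℂ), ∀ p, v k p = a p.1 * b p.2) :
    (∃ (f : Fin 2 → (Fin 2 → ℂ)) (g : Fin 2 → Fin 2 → (Fin 2 → ℂ))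
        (σ : Fin 4 ≃ Fin 2 × Fin 2) (c : Fin 4 → ℂ),
      (∀ i j, star (f i) ⬝ᵥ f j = if i = j then 1 else 0) ∧
      (∀ i j l, star (g i j) ⬝ᵥ g i l = if j = l then 1 else 0) ∧
      (∀ k, ‖c k‖ = 1) ∧
      (∀ k p, v k p = c k * (f (σ k).1 p.1 * g (σ k).1 (σ k).2 p.2)))
    ∨
    (∃ (f : Fin 2 → (Fin 2 → ℂ)) (g : Fin 2 → Fin 2 → (Fin 2 → ℂ))
        (σ : Fin 4 ≃ Fin 2 × Fin 2) (c : Fin 4 → ℂ),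
      (∀ i j, star (f i) ⬝ᵥ f j = if i = j then 1 else 0) ∧
      (∀ i j l, star (g i j) ⬝ᵥ g i l = if j = l then 1 else 0) ∧
      (∀ k, ‖c k‖ = 1) ∧
      (∀ k p, v k p = c k * (f (σ k).1 p.2 * g (σ k).1 (σ k).2 p.1))) := by
  choose a b hab using hprod
  have hprod1 : ∀ k, (star (a k) ⬝ᵥ a k) * (star (b k) ⬝ᵥ b k) = 1 := by
    intro k
    rw [← dp_tensor (v k) (v k) _ _ _ _ (hab k) (hab k), hv k k, if_pos rfl]
  have haself : ∀ k, star (a k) ⬝ᵥ a k ≠ 0 := fun k => left_ne_zero_of_mul_eq_one (hprod1 k)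
  have hbself : ∀ k, star (b k) ⬝ᵥ b k ≠ 0 := fun k => right_ne_zero_of_mul_eq_one (hprod1 k)
  have hor : ∀ k l, k ≠ l → star (a k) ⬝ᵥ a l = 0 ∨ star (b k) ⬝ᵥ b l = 0 := by
    intro k l hkl
    apply mul_eq_zero.mp
    rw [← dp_tensor (v k) (v l) _ _ _ _ (hab k) (hab l), hv k l, if_neg hkl]
  rcases pairUp a b haself hbself hor with ⟨e, h1, h2⟩ | ⟨e, h1, h2⟩
  · exact Or.inl (construct v a b hv hab e h1 h2)
  · right
    set w : Fin 4 → (Fin 2 × Fin 2 → ℂ) := fun k q => v k (q.2, q.1) with hwdef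
    have hw : ∀ k l, star (w k) ⬝ᵥ w l = if k = l then 1 else 0 := by
      intro k l
      rw [← hv k l]
      simp only [dotProduct, Pi.star_apply]
      exact Fintype.sum_equiv (Equiv.prodComm (Fin 2) (Fin 2)) _ _ (fun q => rfl)
    have hwrep : ∀ k q, w k q = b k q.1 * a k q.2 := by
      intro k q
      rw [hwdef]
      simp only []
      rw [hab k (q.2, q.1)]
      ring
    obtain ⟨f, g, σ, c, hf, hg, hc, hrep⟩ := construct w b a hw hwrep e h1 h2
    refine ⟨f, g, σ, c, hf, hg, hc, fun k p => ?_⟩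
    have := hrep k (p.2, p.1)
    rw [hwdef] at this
    simpa using this
end
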